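/- arXiv:1706.06441 — 6 statements merged into one kernel-verified Lean document; each statement's English description precedes it below -/
import Mathlib

section
/- For all positive integers k and r there exists a k-strong bipartite tournament B with minimum out-degree exactly k which admits no r-out-colouring. -/
/-- An `r`-out-colouring of the digraph with arc relation `A`: a colouring of the
vertices with `r` colours such that no out-neighbourhood is monochromatic. -/
def HasOutColouring {V : Type*} (A : V → V → Prop) (r : ℕ) : Prop :=
  ∃ γ : V → Fin r, ∀ v : V, ∃ u w : V, A v u ∧ A v w ∧ γ u ≠ γ w

/-- A bipartite tournament: an orientation of a complete bipartite graph. -/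
def IsBipartiteTournament {V : Type*} (A : V → V → Prop) : Prop :=
  ∃ X : Set V, ∀ u v : V,
    ((u ∈ X ↔ v ∈ X) → ¬ A u v) ∧ ((u ∈ X ↔ v ∉ X) → Xor' (A u v) (A v u))

/-- A digraph is `k`-strong if after deleting any set of fewer than `k` vertices,
the remaining digraph is strongly connected. -/
def IsKStrong {V : Type*} (A : V → V → Prop) (k : ℕ) : Prop :=
  ∀ S : Set V, S.ncard < k → ∀ u v : V, u ∉ S → v ∉ S →
    Relation.ReflTransGen (fun a b => a ∉ S ∧ b ∉ S ∧ A a b) u v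

open Finset

def arc {m : ℕ} (res : Finset (Fin m) → Finset (Fin m)) :
    (Finset (Fin m) ⊕ Fin m) → (Finset (Fin m) ⊕ Fin m) → Prop
  | Sum.inl T, Sum.inr y => y ∈ res T
  | Sum.inr y, Sum.inl T => y ∉ res T
  | Sum.inl _, Sum.inl _ => False
  | Sum.inr _, Sum.inr _ => False

@[simp] lemma arc_inl_inr {m : ℕ} (res : Finset (Fin m) → Finset (Fin m)) (T : Finset (Fin m))
    (y : Fin m) : arc res (Sum.inl T) (Sum.inr y) ↔ y ∈ res T := Iff.rfl

@[simp] lemma arc_inr_inl {m : ℕ} (res : Finset (Fin m) → Finset (Fin m)) (T : Finset (Fin m))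
    (y : Fin m) : arc res (Sum.inr y) (Sum.inl T) ↔ y ∉ res T := Iff.rfl

@[simp] lemma arc_inl_inl {m : ℕ} (res : Finset (Fin m) → Finset (Fin m)) (T T' : Finset (Fin m)) :
    ¬ arc res (Sum.inl T) (Sum.inl T') := fun h => h

@[simp] lemma arc_inr_inr {m : ℕ} (res : Finset (Fin m) → Finset (Fin m)) (y y' : Fin m) :
    ¬ arc res (Sum.inr y) (Sum.inr y') := fun h => h

lemma key_finsets {k m : ℕ} (hk : 0 < k) (hm : k + 2 ≤ m) (y y' : Fin m) (hyy : y ≠ y') :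
    ∃ F : Finset (Finset (Fin m)), F.card = k ∧ ∀ T ∈ F, T.card = k ∧ y ∉ T ∧ y' ∈ T := by
  classical
  obtain ⟨W, hWsub, hWcard⟩ :=
    Finset.exists_subset_card_eq (s := (univ : Finset (Fin m)) \ {y, y'}) (n := k)
      (by
        rw [card_sdiff_of_subset (subset_univ _), card_univ, Fintype.card_fin]
        have : ({y, y'} : Finset (Fin m)).card ≤ 2 := card_insert_le _ _ |>.trans (by simp)
        omega)
  have hyW : y ∉ W := fun h => by simpa using hWsub h
  have hy'W : y' ∉ W := fun h => by simpa using hWsub h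
  refine ⟨W.image (fun w => insert y' (W.erase w)), ?_, ?_⟩
  · rw [card_image_of_injOn, hWcard]
    intro a ha b hb hab
    have hy'a : y' ∉ W.erase a := fun h => hy'W (mem_of_mem_erase h)
    have hy'b : y' ∉ W.erase b := fun h => hy'W (mem_of_mem_erase h)
    have h2 : W.erase a = W.erase b := by
      have := congrArg (fun s => Finset.erase s y') hab
      simpa [Finset.erase_insert hy'a, Finset.erase_insert hy'b] using this
    by_contra hne
    have : a ∈ W.erase b := mem_erase.2 ⟨hne, ha⟩
    rw [← h2] at this
    exact (mem_erase.1 this).1 rfl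
  · intro T hT
    obtain ⟨w, hw, rfl⟩ := mem_image.1 hT
    have hy'e : y' ∉ W.erase w := fun h => hy'W (mem_of_mem_erase h)
    refine ⟨?_, ?_, mem_insert_self _ _⟩
    · rw [card_insert_of_notMem hy'e, card_erase_of_mem hw, hWcard]; omega
    · simp only [mem_insert]
      rintro (h | h)
      · exact hyy h
      · exact hyW (mem_of_mem_erase h)

lemma main_construction (k R : ℕ) (hk : 0 < k) :
    ∃ (V : Type) (_ : Fintype V) (A : V → V → Prop),
      IsBipartiteTournament A ∧ IsKStrong A k ∧
      (∀ v, k ≤ {w | A v w}.ncard) ∧ (∃ v, {w | A v w}.ncard = k) ∧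
      ¬ HasOutColouring A R := by
  classical
  set m := R * k + 2 * k + 2 with hmdef
  have hkm : k + 2 ≤ m := by nlinarith
  obtain ⟨D, -, hD⟩ := Finset.exists_subset_card_eq (s := (univ : Finset (Fin m))) (n := k)
    (by rw [card_univ, Fintype.card_fin]; omega)
  set res : Finset (Fin m) → Finset (Fin m) := fun T => if T.card = k then T else D with hres
  have hrescard : ∀ T, (res T).card = k := by
    intro T; by_cases h : T.card = k <;> simp [hres, h, hD]
  have hreseq : ∀ T : Finset (Fin m), T.card = k → res T = T := by
    intro T h; simp [hres, h]
  have houtL : ∀ T, {w | arc res (Sum.inl T) w} = Sum.inr '' ↑(res T) := by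
    intro T
    ext w
    cases w with
    | inl T' => simp
    | inr y => simp
  have houtLcard : ∀ T, {w | arc res (Sum.inl T) w}.ncard = k := by
    intro T
    rw [houtL, Set.ncard_image_of_injective _ Sum.inr_injective, Set.ncard_coe_finset, hrescard]
  refine ⟨Finset (Fin m) ⊕ Fin m, inferInstance, arc res, ?_, ?_, ?_, ⟨Sum.inl ∅, houtLcard ∅⟩, ?_⟩
  · -- bipartite
    refine ⟨Set.range Sum.inl, ?_⟩
    rintro (T | y) (T' | y')
    · exact ⟨fun _ => arc_inl_inl _ _ _, fun h => absurd h (by simp)⟩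
    · refine ⟨fun h => absurd h (by simp), fun _ => ?_⟩
      by_cases h : y' ∈ res T
      · exact Or.inl ⟨by simpa using h, by simpa using h⟩
      · exact Or.inr ⟨by simpa using h, by simpa using h⟩
    · refine ⟨fun h => absurd h (by simp), fun _ => ?_⟩
      by_cases h : y ∈ res T'
      · exact Or.inr ⟨by simpa using h, by simpa using h⟩
      · exact Or.inl ⟨by simpa using h, by simpa using h⟩
    · exact ⟨fun _ => arc_inr_inr _ _ _, fun h => absurd h (by simp)⟩
  · -- k-strong
    intro S hS u v hu hv
    have hpick : ∀ F : Finset (Finset (Fin m) ⊕ Fin m), k ≤ F.card → ∃ x ∈ F, x ∉ S := by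
      intro F hF
      by_contra h
      push_neg at h
      have hsub : ↑F ⊆ S := fun x hx => h x hx
      have := Set.ncard_le_ncard hsub (Set.toFinite S)
      rw [Set.ncard_coe_finset] at this
      omega
    have hRR : ∀ y y' : Fin m, Sum.inr y ∉ S → Sum.inr y' ∉ S →
        Relation.ReflTransGen (fun a b => a ∉ S ∧ b ∉ S ∧ arc res a b)
          (Sum.inr y) (Sum.inr y') := by
      intro y y' hy hy'
      by_cases hyy : y = y'
      · subst hyy; exact Relation.ReflTransGen.refl
      obtain ⟨F, hFcard, hF⟩ := key_finsets hk hkm y y' hyy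
      obtain ⟨x, hxF, hxS⟩ := hpick (F.image Sum.inl)
        (by rw [card_image_of_injective _ Sum.inl_injective, hFcard])
      obtain ⟨T, hTF, rfl⟩ := mem_image.1 hxF
      obtain ⟨hTc, hyT, hy'T⟩ := hF T hTF
      rw [← hreseq T hTc] at hyT hy'T
      exact Relation.ReflTransGen.head ⟨hy, hxS, hyT⟩
        (Relation.ReflTransGen.single ⟨hxS, hy', hy'T⟩)
    have hpickIn : ∀ T, ∃ y, y ∈ res T ∧ Sum.inr y ∉ S := by
      intro T
      obtain ⟨x, hxF, hxS⟩ := hpick ((res T).image Sum.inr)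
        (by rw [card_image_of_injective _ Sum.inr_injective, hrescard])
      obtain ⟨y, hy, rfl⟩ := mem_image.1 hxF
      exact ⟨y, hy, hxS⟩
    have hpickOut : ∀ T, ∃ y, y ∉ res T ∧ Sum.inr y ∉ S := by
      intro T
      obtain ⟨x, hxF, hxS⟩ := hpick ((univ \ res T).image Sum.inr)
        (by
          rw [card_image_of_injective _ Sum.inr_injective,
            card_sdiff_of_subset (subset_univ _), card_univ, Fintype.card_fin, hrescard]
          omega)
      obtain ⟨y, hy, rfl⟩ := mem_image.1 hxF
      exact ⟨y, (mem_sdiff.1 hy).2, hxS⟩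
    match u, v with
    | Sum.inr y, Sum.inr y' => exact hRR y y' hu hv
    | Sum.inr y, Sum.inl T' =>
      obtain ⟨y'', h1, h2⟩ := hpickOut T'
      exact (hRR y y'' hu h2).tail ⟨h2, hv, h1⟩
    | Sum.inl T, Sum.inr y' =>
      obtain ⟨y0, h1, h2⟩ := hpickIn T
      exact Relation.ReflTransGen.head ⟨hu, h2, h1⟩ (hRR y0 y' h2 hv)
    | Sum.inl T, Sum.inl T' =>
      obtain ⟨y0, h1, h2⟩ := hpickIn T
      obtain ⟨y'', h3, h4⟩ := hpickOut T'
      exact Relation.ReflTransGen.head ⟨hu, h2, h1⟩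
        ((hRR y0 y'' h2 h4).tail ⟨h4, hv, h3⟩)
  · -- min out-degree ≥ k
    rintro (T | y)
    · exact (houtLcard T).ge
    · obtain ⟨y', hy'⟩ := exists_ne y
      obtain ⟨F, hFcard, hF⟩ := key_finsets hk hkm y y' (Ne.symm hy')
      set G := F.image (Sum.inl : Finset (Fin m) → Finset (Fin m) ⊕ Fin m) with hG
      have hsub : (↑G : Set (Finset (Fin m) ⊕ Fin m)) ⊆ {w | arc res (Sum.inr y) w} := by
        intro x hx
        simp only [hG, coe_image, Set.mem_image, mem_coe] at hx
        obtain ⟨T, hTF, rfl⟩ := hx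
        obtain ⟨hTc, hyT, -⟩ := hF T hTF
        rw [← hreseq T hTc] at hyT
        exact hyT
      calc k = G.card := by
              rw [hG, card_image_of_injective _ Sum.inl_injective, hFcard]
        _ = (↑G : Set _).ncard := (Set.ncard_coe_finset _).symm
        _ ≤ _ := Set.ncard_le_ncard hsub (Set.toFinite _)
  · -- no R-out-colouring
    rintro ⟨γ, hγ⟩
    obtain ⟨c, -, hc⟩ := Finset.exists_lt_card_fiber_of_mul_lt_card_of_maps_to
      (s := (univ : Finset (Fin m))) (t := (univ : Finset (Fin R)))
      (f := fun y => γ (Sum.inr y)) (n := k - 1)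
      (fun a _ => mem_univ _)
      (by
        rw [card_univ, card_univ, Fintype.card_fin, Fintype.card_fin]
        have : R * (k - 1) ≤ R * k := Nat.mul_le_mul_left _ (Nat.sub_le _ _)
        omega)
    obtain ⟨T, hTsub, hTcard⟩ :=
      Finset.exists_subset_card_eq (s := univ.filter fun y => γ (Sum.inr y) = c) (n := k)
        (by omega)
    obtain ⟨u, w, hu, hw, hne⟩ := hγ (Sum.inl T)
    have hresT : res T = T := hreseq T hTcard
    have hcol : ∀ x, arc res (Sum.inl T) x → γ x = c := by
      intro x hx
      cases x with
      | inl => exact absurd hx (arc_inl_inl _ _ _)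
      | inr z =>
        have hz : z ∈ T := by rw [← hresT]; exact hx
        exact (mem_filter.1 (hTsub hz)).2
    exact hne ((hcol u hu).trans (hcol w hw).symm)

/-- For all positive integers `k` and `r` there exists a `k`-strong bipartite tournament
with minimum out-degree exactly `k` which admits no `r`-out-colouring. -/
theorem stmt0 (k r : ℕ) (hk : 0 < k) (hr : 0 < r) :
    ∃ (n : ℕ) (A : Fin n → Fin n → Prop),
      IsBipartiteTournament A ∧ IsKStrong A k ∧
      (∀ v, k ≤ {w | A v w}.ncard) ∧ (∃ v, {w | A v w}.ncard = k) ∧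
      ¬ HasOutColouring A r := by
  classical
  obtain ⟨V, hV, A, hbt, hks, hdeg, ⟨v0, hv0⟩, hnoc⟩ := main_construction k r hk
  letI := hV
  set e := Fintype.equivFin V with he
  refine ⟨Fintype.card V, fun i j => A (e.symm i) (e.symm j), ?_, ?_, ?_, ?_, ?_⟩
  · obtain ⟨X, hX⟩ := hbt
    exact ⟨{i | e.symm i ∈ X}, fun u v => hX (e.symm u) (e.symm v)⟩
  · intro S hS u v hu hv
    have hmem : ∀ x : V, x ∈ e.symm '' S ↔ e x ∈ S := by
      intro x
      constructor
      · rintro ⟨i, hi, rfl⟩; simpa using hi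
      · intro h; exact ⟨e x, h, by simp⟩
    have hS0 : (e.symm '' S).ncard < k := by
      rw [Set.ncard_image_of_injective _ e.symm.injective]; exact hS
    have hu' : e.symm u ∉ e.symm '' S := by
      rw [hmem]; simpa using hu
    have hv' : e.symm v ∉ e.symm '' S := by
      rw [hmem]; simpa using hv
    have path := hks (e.symm '' S) hS0 (e.symm u) (e.symm v) hu' hv'
    have lifted := Relation.ReflTransGen.lift (α := V)
      (p := fun i j => i ∉ S ∧ j ∉ S ∧ A (e.symm i) (e.symm j)) (f := e)
      (by intro a b hab; exact (⟨fun hc => hab.1 ((hmem a).2 hc), fun hc => hab.2.1 ((hmem b).2 hc),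
        by simpa using hab.2.2⟩ :
        e a ∉ S ∧ e b ∉ S ∧ A (e.symm (e a)) (e.symm (e b)))) _ _ path
    simpa [Function.onFun] using lifted
  · intro i
    have hset : {j | A (e.symm i) (e.symm j)} = e '' {w | A (e.symm i) w} := by
      ext j
      constructor
      · intro h; exact ⟨e.symm j, h, e.apply_symm_apply j⟩
      · rintro ⟨x, hx, rfl⟩; simpa using hx
    calc k ≤ {w | A (e.symm i) w}.ncard := hdeg _
      _ = {j | A (e.symm i) (e.symm j)}.ncard := by
          rw [hset, Set.ncard_image_of_injective _ e.injective]
  · refine ⟨e v0, ?_⟩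
    have hset : {j | A (e.symm (e v0)) (e.symm j)} = e '' {w | A (e.symm (e v0)) w} := by
      ext j
      constructor
      · intro h; exact ⟨e.symm j, h, e.apply_symm_apply j⟩
      · rintro ⟨x, hx, rfl⟩; simpa using hx
    rw [show {w | A (e.symm (e v0)) (e.symm w)} = {j | A (e.symm (e v0)) (e.symm j)} from rfl,
      hset, Set.ncard_image_of_injective _ e.injective, Equiv.symm_apply_apply]
    exact hv0
  · rintro ⟨γ, hγ⟩
    apply hnoc
    refine ⟨fun x => γ (e x), fun x => ?_⟩
    obtain ⟨u, w, hu, hw, hne⟩ := hγ (e x)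
    refine ⟨e.symm u, e.symm w, by simpa using hu, by simpa using hw, by simpa using hne⟩
end

section
/- Every tournament on n ≥ 5 vertices contains either an in-dominating vertex or an in-dominating directed cycle of length at most n−2. -/
/-- A tournament: between any two distinct vertices there is exactly one arc,
and there are no loops. -/
def IsTournament {V : Type*} (A : V → V → Prop) : Prop :=
  (∀ v : V, ¬ A v v) ∧ ∀ u v : V, u ≠ v → Xor' (A u v) (A v u)

namespace Tourn

variable {V : Type*} {A : V → V → Prop}

lemma ne_of_arc (hT : IsTournament A) {u v : V} (h : A u v) : u ≠ v := by
  rintro rfl; exact hT.1 u h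

lemma not_both (hT : IsTournament A) {u v : V} (h1 : A u v) (h2 : A v u) : False := by
  rcases hT.2 u v (ne_of_arc hT h1) with ⟨_, hb⟩ | ⟨_, hb⟩
  · exact hb h2
  · exact hb h1

lemma arc_of_ne (hT : IsTournament A) {u v : V} (hne : u ≠ v) (h : ¬ A u v) : A v u := by
  rcases hT.2 u v hne with ⟨ha, _⟩ | ⟨ha, _⟩
  · exact absurd ha h
  · exact ha

lemma cross {P : V → Prop} {u w : V} (h : Relation.ReflTransGen A u w) (hu : P u) :
    ¬ P w → ∃ p q, P p ∧ ¬ P q ∧ A p q := by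
  induction h with
  | refl => exact fun hw => absurd hu hw
  | @tail b c h' harc ih =>
    intro hw
    by_cases hb : P b
    · exact ⟨b, c, hb, hw, harc⟩
    · exact ih hb

/-- A (directed) cycle given as a list: no duplicates, consecutive arcs, wrap-around arc. -/
def CycC (A : V → V → Prop) (l : List V) : Prop :=
  l.Nodup ∧ l.Chain' A ∧ ∀ p q, l.getLast? = some p → l.head? = some q → A p q

lemma cycC_rotate_one {l : List V} (h : CycC A l) : CycC A (l.rotate 1) := by
  cases l with
  | nil => simpa using h
  | cons a t =>
    have hrot : (a :: t).rotate 1 = t ++ [a] := by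
      simpa using List.rotate_cons_succ t a 0
    rw [hrot]
    obtain ⟨hnd, hch, hwrap⟩ := h
    refine ⟨?_, ?_, ?_⟩
    · exact (List.perm_append_singleton a t).nodup_iff.2 hnd
    · rw [List.Chain', List.isChain_append]
      refine ⟨(List.isChain_cons.1 hch).2, List.isChain_singleton a, ?_⟩
      intro x hx y hy
      simp only [List.head?_cons, Option.mem_def, Option.some.injEq] at hy
      subst hy
      cases t with
      | nil => simp at hx
      | cons b t' =>
        refine hwrap x a ?_ rfl
        rw [List.getLast?_cons_cons]
        exact Option.mem_def.1 hx
    · intro p q hp hq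
      rw [List.getLast?_concat] at hp
      have hp' : a = p := Option.some_inj.1 hp
      subst hp'
      cases t with
      | nil =>
        simp only [List.nil_append, List.head?_cons] at hq
        have hq' : a = q := Option.some_inj.1 hq
        subst hq'
        exact hwrap a a (by simp) rfl
      | cons b t' =>
        simp only [List.cons_append, List.head?_cons] at hq
        have hq' : b = q := Option.some_inj.1 hq
        subst hq'
        exact (List.isChain_cons_cons.1 hch).1

lemma cycC_rotate {l : List V} (h : CycC A l) (n : ℕ) : CycC A (l.rotate n) := by
  induction n with
  | zero => simpa using h
  | succ k ih =>
    have heq : l.rotate (k + 1) = (l.rotate k).rotate 1 := by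
      rw [List.rotate_rotate]
    rw [heq]
    exact cycC_rotate_one ih

lemma exists_rotate_head {l : List V} {x : V} (hx : x ∈ l) :
    ∃ n t, l.rotate n = x :: t ∧ List.Perm (x :: t) l := by
  obtain ⟨s, t, rfl⟩ := List.append_of_mem hx
  refine ⟨s.length, t ++ s, ?_, ?_⟩
  · rw [List.rotate_eq_drop_append_take (by simp)]
    rw [List.drop_left, List.take_left, List.cons_append]
  · rw [show (x :: (t ++ s) : List V) = (x :: t) ++ s by simp]
    exact List.perm_append_comm

lemma scanlist (hT : IsTournament A) {v : V} :
    ∀ l : List V, l.Chain' A → v ∉ l →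
      (∀ s t p q, l = s ++ p :: q :: t → ¬ (A p v ∧ A v q)) →
      ∀ a, l.head? = some a → A a v → ∀ z ∈ l, A z v := by
  intro l
  induction l with
  | nil => intro _ _ _ a _ _ z hz; simp at hz
  | cons a t ih =>
    intro hch hv hpairs a' ha' hav z hz
    simp only [List.head?_cons, Option.some.injEq] at ha'
    subst ha'
    cases t with
    | nil =>
      simp only [List.mem_cons, List.not_mem_nil, or_false] at hz
      subst hz; exact hav
    | cons b t' =>
      have hbv : A b v := by
        have h1 := hpairs [] t' a b rfl
        have h2 : ¬ A v b := fun h => h1 ⟨hav, h⟩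
        exact arc_of_ne hT (fun he => hv (by simp [he])) h2
      rcases List.mem_cons.1 hz with rfl | hz'
      · exact hav
      · exact ih (List.isChain_cons_cons.1 hch).2 (fun h => hv (List.mem_cons.2 (Or.inr h)))
          (fun s t'' p q heq => hpairs (a :: s) t'' p q (by rw [heq]; rfl))
          b rfl hbv z hz'

lemma outside_exists [Fintype V] {l : List V} (hnd : l.Nodup)
    (hlt : l.length < Fintype.card V) : ∃ v, v ∉ l := by
  classical
  by_contra h
  push_neg at h
  have h1 : (Finset.univ : Finset V) ⊆ l.toFinset := fun v _ => List.mem_toFinset.2 (h v)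
  have h2 := Finset.card_le_card h1
  rw [List.toFinset_card_of_nodup hnd, Finset.card_univ] at h2
  omega

lemma ext_step [Fintype V] (hT : IsTournament A)
    (hstrong : ∀ u w : V, Relation.ReflTransGen A u w)
    {l : List V} (hc : CycC A l) (h3 : 3 ≤ l.length) {x : V} (hx : x ∈ l)
    {v0 : V} (hv0 : v0 ∉ l) :
    ∃ l', CycC A l' ∧ l'.length = l.length + 1 ∧ x ∈ l' := by
  classical
  by_cases hins : ∃ v, v ∉ l ∧ ∃ n p q, (l.rotate n).getLast? = some p ∧
      (l.rotate n).head? = some q ∧ A p v ∧ A v q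
  · obtain ⟨v, hv, n, p, q, hlast, hhead, hpv, hvq⟩ := hins
    have hcr : CycC A (l.rotate n) := cycC_rotate hc n
    set r := l.rotate n with hr
    have hvr : v ∉ r := fun h => hv (List.mem_rotate.1 h)
    obtain ⟨rt, hrt⟩ : ∃ rt, r = q :: rt := by
      cases hrr : r with
      | nil => rw [hrr] at hhead; simp at hhead
      | cons a t =>
        rw [hrr] at hhead
        simp only [List.head?_cons, Option.some.injEq] at hhead
        exact ⟨t, by rw [hhead]⟩
    refine ⟨r ++ [v], ⟨?_, ?_, ?_⟩, by simp [hr], ?_⟩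
    · rw [List.nodup_append]
      refine ⟨hcr.1, List.nodup_singleton v, ?_⟩
      intro a ha b hav hab
      simp only [List.mem_singleton] at hav
      subst hav
      exact hvr (hab ▸ ha)
    · rw [List.Chain', List.isChain_append]
      refine ⟨hcr.2.1, List.isChain_singleton v, ?_⟩
      intro a ha b hb
      simp only [List.head?_cons, Option.mem_def, Option.some.injEq] at hb
      subst hb
      rw [Option.mem_def, hlast] at ha
      have ha' : p = a := Option.some_inj.1 ha
      subst ha'
      exact hpv
    · intro p' q' hp' hq'
      rw [List.getLast?_concat] at hp'
      have hp'' : v = p' := Option.some_inj.1 hp'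
      subst hp''
      rw [hrt] at hq'
      simp only [List.cons_append, List.head?_cons] at hq'
      have hq'' : q = q' := Option.some_inj.1 hq'
      subst hq''
      exact hvq
    · exact List.mem_append_left _ (List.mem_rotate.2 hx)
  · push_neg at hins
    have hlnil : l ≠ [] := by intro h; rw [h] at h3; simp at h3
    -- dichotomy for outside vertices
    have dich : ∀ v, v ∉ l → (∀ z ∈ l, A v z) ∨ (∀ z ∈ l, A z v) := by
      intro v hv
      by_cases hin : ∃ z ∈ l, A z v
      · right
        obtain ⟨z, hz, hzv⟩ := hin
        obtain ⟨n, t, hrot, hperm⟩ := exists_rotate_head hz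
        have hcr : CycC A (l.rotate n) := cycC_rotate hc n
        rw [hrot] at hcr
        have hpairs : ∀ s t' p q, z :: t = s ++ p :: q :: t' → ¬ (A p v ∧ A v q) := by
          intro s t' p q heq hpq
          have heq2 : s ++ p :: q :: t' = (s ++ [p]) ++ q :: t' := by simp
          have hsplen : s.length + 1 = (s ++ [p]).length := by simp
          have hrot2 : l.rotate (n + (s.length + 1)) = (q :: t') ++ (s ++ [p]) := by
            rw [← List.rotate_rotate, hrot, heq, heq2, hsplen,
              List.rotate_eq_drop_append_take (by simp), List.drop_left, List.take_left]
          exact hins v hv (n + (s.length + 1)) p q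
            (by rw [hrot2, List.getLast?_append, List.getLast?_concat]; rfl)
            (by rw [hrot2]; rfl) hpq.1 hpq.2
        have hscan := scanlist hT (z :: t) hcr.2.1
          (fun h => hv (hperm.mem_iff.1 h)) hpairs z rfl hzv
        intro w hw
        exact hscan w (hperm.mem_iff.2 hw)
      · left
        intro z hz
        push_neg at hin
        exact arc_of_ne hT (fun he => hv (he ▸ hz)) (hin z hz)
    obtain ⟨z0, hz0⟩ := List.exists_mem_of_ne_nil l hlnil
    -- Y nonempty
    have hYne : ∃ y, y ∉ l ∧ ∀ z ∈ l, A z y := by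
      by_contra hY
      push_neg at hY
      obtain ⟨p, q, hp, hq, hpq⟩ := cross (P := fun z => z ∈ l) (hstrong z0 v0) hz0 hv0
      rcases dich q hq with hX | hYq
      · exact not_both hT hpq (hX p hp)
      · obtain ⟨z, hz, hzq⟩ := hY q hq
        exact hzq (hYq z hz)
    obtain ⟨y0, hy0, hYy0⟩ := hYne
    -- arc from Y to X
    obtain ⟨ys, xs, hysl, hysY, hxsl, hxsX, hyx⟩ :
        ∃ ys xs, ys ∉ l ∧ (∀ z ∈ l, A z ys) ∧ xs ∉ l ∧ (∀ z ∈ l, A xs z) ∧ A ys xs := by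
      obtain ⟨p, q, hp, hq, hpq⟩ := cross (P := fun w => w ∉ l ∧ ∀ z ∈ l, A z w)
        (hstrong y0 z0) ⟨hy0, hYy0⟩ (fun hc' => hc'.1 hz0)
      have hql : q ∉ l := fun hql => not_both hT hpq (hp.2 q hql)
      rcases dich q hql with hX | hY2
      · exact ⟨p, q, hp.1, hp.2, hql, hX, hpq⟩
      · exact absurd ⟨hql, hY2⟩ hq
    -- pick d ∈ l with d ≠ x
    obtain ⟨d, hdl, hdx⟩ : ∃ d ∈ l, d ≠ x := by
      by_contra hcon
      push_neg at hcon
      cases l with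
      | nil => simp at h3
      | cons a t =>
        cases t with
        | nil => simp at h3
        | cons b t' =>
          have ha : a = x := hcon a (by simp)
          have hb : b = x := hcon b (by simp)
          have hnd := hc.1
          rw [List.nodup_cons] at hnd
          exact hnd.1 (by simp [ha, hb])
    obtain ⟨n, t, hrot, hperm⟩ := exists_rotate_head hdl
    have hcr : CycC A (l.rotate n) := cycC_rotate hc n
    rw [hrot] at hcr
    have htlen : t.length + 1 = l.length := by
      have := congrArg List.length hrot
      simp at this
      omega
    obtain ⟨t0, t', rfl⟩ : ∃ t0 t', t = t0 :: t' := by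
      cases t with
      | nil => exfalso; simp at htlen; omega
      | cons t0 t' => exact ⟨t0, t', rfl⟩
    have hysxs : ys ≠ xs := ne_of_arc hT hyx
    refine ⟨(t0 :: t') ++ [ys, xs], ⟨?_, ?_, ?_⟩, ?_, ?_⟩
    · rw [List.nodup_append]
      refine ⟨(List.nodup_cons.1 hcr.1).2, by simp [hysxs], ?_⟩
      intro a ha b hab hab'
      have hal : a ∈ l := hperm.mem_iff.1 (List.mem_cons.2 (Or.inr ha))
      simp only [List.mem_cons, List.mem_singleton, List.not_mem_nil, or_false] at hab
      rcases hab with rfl | rfl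
      · exact hysl (hab' ▸ hal)
      · exact hxsl (hab' ▸ hal)
    · rw [List.Chain', List.isChain_append]
      refine ⟨(List.isChain_cons.1 hcr.2.1).2, ?_, ?_⟩
      · rw [List.isChain_cons_cons]
        exact ⟨hyx, List.isChain_singleton xs⟩
      · intro a ha b hb
        simp only [List.head?_cons, Option.mem_def, Option.some.injEq] at hb
        subst hb
        have hal : a ∈ l := by
          apply hperm.mem_iff.1
          exact List.mem_cons.2 (Or.inr (List.mem_of_mem_getLast? ha))
        exact hysY a hal
    · intro p q hp hq
      have hp' : p = xs := by
        rw [show (t0 :: t') ++ [ys, xs] = ((t0 :: t') ++ [ys]) ++ [xs] by simp,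
          List.getLast?_concat] at hp
        exact (Option.some_inj.1 hp).symm
      have hq' : q = t0 := by
        simp only [List.cons_append, List.head?_cons] at hq
        exact (Option.some_inj.1 hq).symm
      rw [hp', hq']
      exact hxsX t0 (hperm.mem_iff.1 (by simp))
    · simp only [List.length_cons] at htlen
      simp only [List.length_append, List.length_cons, List.length_nil]
      omega
    · have hxdt : x ∈ d :: (t0 :: t') := hperm.mem_iff.2 hx
      rcases List.mem_cons.1 hxdt with rfl | hxt
      · exact absurd rfl hdx
      · exact List.mem_append_left _ hxt

lemma ext_iter [Fintype V] (hT : IsTournament A)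
    (hstrong : ∀ u w : V, Relation.ReflTransGen A u w) {x : V} :
    ∀ (k : ℕ) (l : List V), CycC A l → 3 ≤ l.length → x ∈ l →
      l.length + k ≤ Fintype.card V →
      ∃ l', CycC A l' ∧ l'.length = l.length + k ∧ x ∈ l' := by
  intro k
  induction k with
  | zero => intro l hc h3 hx _; exact ⟨l, hc, by omega, hx⟩
  | succ k ih =>
    intro l hc h3 hx hle
    obtain ⟨v, hv⟩ := outside_exists hc.1 (by omega)
    obtain ⟨l', hc', hlen', hx'⟩ := ext_step hT hstrong hc h3 hx hv
    obtain ⟨l'', hc'', hlen'', hx''⟩ := ih l' hc' (by omega) hx' (by omega)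
    exact ⟨l'', hc'', by omega, hx''⟩

lemma three_cycle_thru [Fintype V] (hT : IsTournament A)
    (hstrong : ∀ u w : V, Relation.ReflTransGen A u w)
    (h2 : 2 ≤ Fintype.card V) (x : V) :
    ∃ l : List V, CycC A l ∧ l.length = 3 ∧ x ∈ l := by
  haveI : Nontrivial V := Fintype.one_lt_card_iff_nontrivial.1 h2
  obtain ⟨w, hw⟩ := exists_ne x
  obtain ⟨p2, q2, hp2, hq2, harc2⟩ := cross (P := fun z => z ≠ x) (hstrong w x) hw (by simp)
  have hq2x : q2 = x := not_not.1 hq2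
  rw [hq2x] at harc2
  have hnp2 : ¬ (p2 = x ∨ A x p2) := by
    rintro (rfl | h)
    · exact hp2 rfl
    · exact not_both hT h harc2
  obtain ⟨p, q, hp, hq, hpq⟩ := cross (P := fun z => z = x ∨ A x z) (hstrong x p2)
    (Or.inl rfl) hnp2
  push_neg at hq
  have hqx : A q x := arc_of_ne hT (Ne.symm hq.1) hq.2
  have hxp : A x p := by
    rcases hp with rfl | h
    · exact absurd hpq hq.2
    · exact h
  have hxpne : x ≠ p := ne_of_arc hT hxp
  have hpqne : p ≠ q := ne_of_arc hT hpq
  have hqxne : q ≠ x := ne_of_arc hT hqx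
  refine ⟨[x, p, q], ⟨?_, ?_, ?_⟩, rfl, by simp⟩
  · simp [hxpne, hpqne, Ne.symm hqxne]
  · rw [List.Chain', List.isChain_cons_cons, List.isChain_cons_cons]
    exact ⟨hxp, hpq, List.isChain_singleton q⟩
  · intro p' q' hp' hq'
    have e1 : ([x, p, q] : List V).getLast? = some q := by simp
    rw [e1] at hp'
    have e2 : ([x, p, q] : List V).head? = some x := rfl
    rw [e2] at hq'
    rw [← Option.some_inj.1 hp', ← Option.some_inj.1 hq']
    exact hqx

lemma strong_indom [Fintype V] (hT : IsTournament A)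
    (hstrong : ∀ u w : V, Relation.ReflTransGen A u w)
    (h2 : 2 ≤ Fintype.card V) :
    ∃ l : List V, CycC A l ∧ 3 ≤ l.length ∧ l.length ≤ max 3 (Fintype.card V - 2) ∧
      ∀ u, u ∉ l → ∃ w ∈ l, A u w := by
  classical
  haveI : Nontrivial V := Fintype.one_lt_card_iff_nontrivial.1 h2
  obtain ⟨x0⟩ : Nonempty V := inferInstance
  rcases le_or_gt (Fintype.card V) 4 with h4 | h5
  · obtain ⟨l, hc, hlen, -⟩ := three_cycle_thru hT hstrong h2 x0
    refine ⟨l, hc, by omega, le_max_of_le_left (by omega), ?_⟩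
    intro u hu
    obtain ⟨w, hwu⟩ := exists_ne u
    obtain ⟨p, q, hp, hq, hpq⟩ := cross (P := fun z => z = u) (hstrong u w) rfl hwu
    rw [hp] at hpq
    refine ⟨q, ?_, hpq⟩
    by_contra hql
    have hqu : q ≠ u := Ne.symm (ne_of_arc hT hpq)
    have hun : u ∉ insert q l.toFinset := by
      simp only [Finset.mem_insert, List.mem_toFinset]
      push_neg
      exact ⟨fun h => hqu h.symm, hu⟩
    have hcard : (insert u (insert q l.toFinset)).card = 5 := by
      rw [Finset.card_insert_of_notMem hun,
        Finset.card_insert_of_notMem (by simp [hql]),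
        List.toFinset_card_of_nodup hc.1, hlen]
    have hle : (insert u (insert q l.toFinset)).card ≤ Fintype.card V :=
      Finset.card_le_univ _
    omega
  · -- Fintype.card V ≥ 5
    obtain ⟨l0, hc0, hl0, hx0⟩ := three_cycle_thru hT hstrong h2 x0
    obtain ⟨l1, hc1, hlen1, -⟩ := ext_iter hT hstrong (Fintype.card V - 5) l0 hc0
      (by omega) hx0 (by omega)
    have hlen1' : l1.length = Fintype.card V - 2 := by omega
    by_cases hdom : ∀ u, u ∉ l1 → ∃ w ∈ l1, A u w
    · exact ⟨l1, hc1, by omega, le_max_of_le_right (by omega), hdom⟩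
    · push_neg at hdom
      obtain ⟨a, hal, ha⟩ := hdom
      have hcompl : (Finset.univ \ l1.toFinset).card = 2 := by
        rw [Finset.card_sdiff_of_subset (Finset.subset_univ _), Finset.card_univ,
          List.toFinset_card_of_nodup hc1.1]
        omega
      obtain ⟨c, d, hcd, hset⟩ := Finset.card_eq_two.1 hcompl
      have hmemcompl : ∀ z, z ∉ l1 → z = c ∨ z = d := by
        intro z hz
        have hzc : z ∈ (Finset.univ \ l1.toFinset) := by
          simp [List.mem_toFinset, hz]
        rw [hset] at hzc
        simpa using hzc
      obtain ⟨b, hbne, hbl, hb⟩ : ∃ b, b ≠ a ∧ b ∉ l1 ∧ ∀ z, z ∉ l1 → z ≠ a → z = b := by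
        rcases hmemcompl a hal with rfl | rfl
        · refine ⟨d, Ne.symm hcd, ?_, ?_⟩
          · have hd : d ∈ (Finset.univ \ l1.toFinset) := by rw [hset]; simp
            simpa using hd
          · intro z hz hza
            rcases hmemcompl z hz with rfl | rfl
            · exact absurd rfl hza
            · rfl
        · refine ⟨c, hcd, ?_, ?_⟩
          · have hcm : c ∈ (Finset.univ \ l1.toFinset) := by rw [hset]; simp
            simpa using hcm
          · intro z hz hza
            rcases hmemcompl z hz with rfl | rfl
            · rfl
            · exact absurd rfl hza
      have hNab : ∀ w, A a w → w = b := by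
        intro w hw
        have hwl : w ∉ l1 := fun hwl => (ha w hwl) hw
        have hwa : w ≠ a := Ne.symm (ne_of_arc hT hw)
        exact hb w hwl hwa
      obtain ⟨l2', hc2', hl2', ha2'⟩ := three_cycle_thru hT hstrong h2 a
      obtain ⟨l2, hc2, hlen2, ha2⟩ := ext_iter hT hstrong (Fintype.card V - 5) l2' hc2'
        (by omega) ha2' (by omega)
      have hlen2' : l2.length = Fintype.card V - 2 := by omega
      have hb2 : b ∈ l2 := by
        obtain ⟨m, t, hrot, hperm⟩ := exists_rotate_head ha2
        have hcr : CycC A (l2.rotate m) := cycC_rotate hc2 m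
        rw [hrot] at hcr
        obtain ⟨s, t', rfl⟩ : ∃ s t', t = s :: t' := by
          cases t with
          | nil =>
            exfalso
            have hlenrot := congrArg List.length hrot
            simp at hlenrot
            omega
          | cons s t' => exact ⟨s, t', rfl⟩
        have has : A a s := (List.isChain_cons_cons.1 hcr.2.1).1
        have hsb : s = b := hNab s has
        apply hperm.mem_iff.1
        simp [← hsb]
      refine ⟨l2, hc2, by omega, le_max_of_le_right (by omega), ?_⟩
      intro u hu
      have hua : u ≠ a := fun h => hu (h ▸ ha2)
      by_cases h : A u a
      · exact ⟨a, ha2, h⟩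
      · have hau : A a u := arc_of_ne hT hua h
        have hub : u = b := hNab u hau
        exact absurd (hub ▸ hb2) hu

lemma toZMod {l : List V} (hc : CycC A l) (h3 : 3 ≤ l.length) :
    ∃ φ : ZMod l.length → V, Function.Injective φ ∧ (∀ i, A (φ i) (φ (i + 1))) ∧
      (∀ u, u ∈ Set.range φ ↔ u ∈ l) := by
  haveI : NeZero l.length := ⟨by omega⟩
  have hlnil : l ≠ [] := by intro h; rw [h] at h3; simp at h3
  refine ⟨fun i => l.get ⟨i.val, ZMod.val_lt i⟩, ?_, ?_, ?_⟩
  · intro i j hij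
    have h1 : (⟨i.val, ZMod.val_lt i⟩ : Fin l.length) = ⟨j.val, ZMod.val_lt j⟩ :=
      (hc.1.get_inj_iff).1 hij
    have h2 : i.val = j.val := congrArg Fin.val h1
    exact ZMod.natCast_rightInverse.injective (by rw [h2])
  · intro i
    show A (l.get ⟨i.val, ZMod.val_lt i⟩) (l.get ⟨(i+1).val, ZMod.val_lt _⟩)
    have hval : (i + 1).val = (i.val + 1) % l.length := by
      rw [ZMod.val_add, ZMod.val_one_eq_one_mod,
        Nat.mod_eq_of_lt (show (1:ℕ) < l.length by omega)]
    rcases Nat.lt_or_ge (i.val + 1) l.length with hlt | hge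
    · have hv2 : (i + 1).val = i.val + 1 := by rw [hval, Nat.mod_eq_of_lt hlt]
      have e2 : (⟨(i+1).val, ZMod.val_lt _⟩ : Fin l.length) = ⟨i.val + 1, hlt⟩ :=
        Fin.ext hv2
      rw [e2]
      exact (List.isChain_iff_getElem.1 hc.2.1) i.val (by omega)
    · have hival : i.val = l.length - 1 := by
        have := ZMod.val_lt i
        omega
      have hv2 : (i + 1).val = 0 := by
        rw [hval, hival]
        have heq : l.length - 1 + 1 = l.length := by omega
        rw [heq, Nat.mod_self]
      have hwrap := hc.2.2 (l.getLast hlnil) (l.head hlnil)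
        (List.getLast?_eq_getLast hlnil) (List.head?_eq_head hlnil)
      have e1 : l.getLast hlnil = l.get ⟨i.val, ZMod.val_lt i⟩ := by
        rw [List.getLast_eq_getElem, List.get_eq_getElem]
        congr 1
        exact (show l.length - 1 = i.val by omega)
      have e2 : l.head hlnil = l.get ⟨(i+1).val, ZMod.val_lt _⟩ := by
        rw [← List.get_mk_zero (by omega : 0 < l.length)]
        congr 1
        exact Fin.ext (show (0:ℕ) = (i+1).val by omega)
      rw [← e1, ← e2]
      exact hwrap
  · intro u
    constructor
    · rintro ⟨i, rfl⟩
      exact List.get_mem l ⟨i.val, ZMod.val_lt i⟩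
    · intro hu
      obtain ⟨⟨k, hk⟩, hget⟩ := List.mem_iff_get.1 hu
      refine ⟨(k : ZMod l.length), ?_⟩
      have hkv : ((k : ZMod l.length)).val = k := ZMod.val_cast_of_lt hk
      show l.get ⟨((k : ZMod l.length)).val, ZMod.val_lt _⟩ = u
      rw [← hget]
      congr 1
      exact Fin.ext hkv

/-- The set of vertices reachable from every vertex. -/
def Sset (A : V → V → Prop) : Set V := {v | ∀ u, Relation.ReflTransGen A u v}

lemma S_arc_in (hT : IsTournament A) {u w : V} (hu : u ∉ Sset A) (hw : w ∈ Sset A) :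
    A u w := by
  by_contra h
  have hne : u ≠ w := by rintro rfl; exact hu hw
  have hwu : A w u := arc_of_ne hT hne h
  exact hu (fun x => (hw x).tail hwu)

lemma S_nonempty [Fintype V] [Nonempty V] (hT : IsTournament A) : ∃ v, v ∈ Sset A := by
  classical
  obtain ⟨v, -, hv⟩ := Finset.exists_max_image Finset.univ
    (fun v => (Finset.univ.filter (fun u => A u v)).card) Finset.univ_nonempty
  refine ⟨v, ?_⟩
  intro u
  by_contra hru
  have hvu : A v u := by
    apply arc_of_ne hT
    · rintro rfl; exact hru Relation.ReflTransGen.refl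
    · exact fun h => hru (Relation.ReflTransGen.single h)
  have hsub : (Finset.univ.filter (fun w => A w v)) ⊂ (Finset.univ.filter (fun w => A w u)) := by
    constructor
    · intro w hwv
      simp only [Finset.mem_filter, Finset.mem_univ, true_and] at hwv ⊢
      have h1 : ¬ A u w := fun h => hru ((Relation.ReflTransGen.single h).tail hwv)
      have h2 : u ≠ w := by rintro rfl; exact hru (Relation.ReflTransGen.single hwv)
      exact arc_of_ne hT h2 h1
    · intro hsub'
      have hmem : v ∈ Finset.univ.filter (fun w => A w u) := by
        simp only [Finset.mem_filter, Finset.mem_univ, true_and]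
        exact hvu
      have := hsub' hmem
      simp only [Finset.mem_filter, Finset.mem_univ, true_and] at this
      exact hT.1 v this
  have hlt := Finset.card_lt_card hsub
  have := hv u (Finset.mem_univ u)
  omega

lemma S_closed_reach {a b : V} (h : Relation.ReflTransGen A a b) (ha : a ∈ Sset A) :
    b ∈ Sset A := fun u => (ha u).trans h

lemma lift_reach {a b : V} (h : Relation.ReflTransGen A a b) (ha : a ∈ Sset A) :
    ∀ (hb : b ∈ Sset A),
      Relation.ReflTransGen (fun x y : (Sset A) => A x.1 y.1) ⟨a, ha⟩ ⟨b, hb⟩ := by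
  induction h with
  | refl => intro hb; exact Relation.ReflTransGen.refl
  | @tail b' c h' harc ih =>
    intro hb
    exact (ih (S_closed_reach h' ha)).tail harc

end Tourn

/-- Every tournament on `n ≥ 5` vertices contains either an in-dominating vertex or an
in-dominating directed cycle of length at most `n - 2`. -/
theorem stmt1 {V : Type*} [Fintype V] (A : V → V → Prop) (hT : IsTournament A)
    (hn : 5 ≤ Fintype.card V) :
    (∃ v : V, ∀ u : V, u ≠ v → A u v) ∨
    (∃ m : ℕ, 2 ≤ m ∧ m ≤ Fintype.card V - 2 ∧
      ∃ φ : ZMod m → V, Function.Injective φ ∧ (∀ i, A (φ i) (φ (i + 1))) ∧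
        ∀ u : V, u ∉ Set.range φ → ∃ w ∈ Set.range φ, A u w) := by
  classical
  by_cases hall : ∀ v u : V, Relation.ReflTransGen A u v
  · right
    obtain ⟨l, hc, h3, hmax, hdom⟩ := Tourn.strong_indom hT (fun u w => hall w u) (by omega)
    obtain ⟨φ, hinj, harcs, hrange⟩ := Tourn.toZMod hc h3
    have hmax' : l.length ≤ Fintype.card V - 2 := by
      rw [max_eq_right (by omega : 3 ≤ Fintype.card V - 2)] at hmax
      exact hmax
    refine ⟨l.length, by omega, hmax', φ, hinj, harcs, ?_⟩
    intro u hu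
    have hul : u ∉ l := fun h => hu ((hrange u).2 h)
    obtain ⟨w, hwl, hw⟩ := hdom u hul
    exact ⟨w, (hrange w).2 hwl, hw⟩
  · push_neg at hall
    obtain ⟨v₀, u₀, hv₀⟩ := hall
    haveI : Nonempty V := ⟨v₀⟩
    obtain ⟨vS, hvS⟩ := Tourn.S_nonempty hT
    by_cases hone : ∀ u, u ∈ Tourn.Sset A → u = vS
    · left
      exact ⟨vS, fun u hune => Tourn.S_arc_in hT (fun hmem => hune (hone u hmem)) hvS⟩
    · right
      push_neg at hone
      obtain ⟨u1, hu1S, hu1ne⟩ := hone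
      haveI : DecidablePred (· ∈ Tourn.Sset A) := Classical.decPred _
      have hT' : IsTournament (fun a b : (Tourn.Sset A) => A a.1 b.1) := by
        constructor
        · intro v; exact hT.1 v.1
        · intro u v huv
          exact hT.2 u.1 v.1 (fun h => huv (Subtype.ext h))
      have hstrong' : ∀ u w : (Tourn.Sset A),
          Relation.ReflTransGen (fun a b : (Tourn.Sset A) => A a.1 b.1) u w := by
        intro u w
        exact Tourn.lift_reach (A := A) (w.2 u.1) u.2 w.2
      have hcard2 : 2 ≤ Fintype.card (Tourn.Sset A) := by
        rw [Nat.succ_le_iff, Fintype.one_lt_card_iff_nontrivial]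
        exact ⟨⟨⟨u1, hu1S⟩, ⟨vS, hvS⟩, fun h => hu1ne (congrArg Subtype.val h)⟩⟩
      have hv₀S : v₀ ∉ Tourn.Sset A := fun hmem => hv₀ (hmem u₀)
      have hcardlt : Fintype.card (Tourn.Sset A) < Fintype.card V :=
        Fintype.card_subtype_lt (x := v₀) hv₀S
      obtain ⟨l, hc, h3, hmax, hdom⟩ := Tourn.strong_indom hT' hstrong' hcard2
      obtain ⟨φ, hinj, harcs, hrange⟩ := Tourn.toZMod hc h3
      have hbound : l.length ≤ Fintype.card V - 2 := by
        have h' : max 3 (Fintype.card (Tourn.Sset A) - 2) ≤ Fintype.card V - 2 :=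
          max_le (by omega) (by omega)
        omega
      refine ⟨l.length, by omega, hbound, fun i => (φ i).1,
        Subtype.val_injective.comp hinj, fun i => harcs i, ?_⟩
      intro u hu
      by_cases huS : u ∈ Tourn.Sset A
      · have hnotl : (⟨u, huS⟩ : (Tourn.Sset A)) ∉ l := by
          intro hmem
          obtain ⟨i, hi⟩ := (hrange _).2 hmem
          exact hu ⟨i, congrArg Subtype.val hi⟩
        obtain ⟨w, hwl, hw⟩ := hdom _ hnotl
        obtain ⟨i, hi⟩ := (hrange w).2 hwl
        exact ⟨w.1, ⟨i, congrArg Subtype.val hi⟩, hw⟩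
      · exact ⟨(φ 0).1, ⟨0, rfl⟩, Tourn.S_arc_in hT huS (φ 0).2⟩
end

section
/- Every tournament T with minimum out-degree at least 3 which has an in-dominating set of size 2 admits a 2-out-colouring. -/
lemma key_lemma {V : Type*} [Fintype V] (A : V → V → Prop) (hT : IsTournament A)
    (hδ : ∀ v : V, 3 ≤ {w | A v w}.ncard) (a b : V) (hab : A a b)
    (hdom : ∀ u : V, u ≠ a → u ≠ b → A u a ∨ A u b) :
    HasOutColouring A 2 := by
  classical
  obtain ⟨hirr, hxor⟩ := hT
  have hne : a ≠ b := by rintro rfl; exact hirr a hab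
  have hba : ¬ A b a := by
    rcases hxor a b hne with ⟨_, h⟩ | ⟨_, h⟩
    · exact h
    · exact absurd hab h
  have noboth : ∀ u v : V, A u v → A v u → False := by
    intro u v h1 h2
    have huv : u ≠ v := by rintro rfl; exact hirr u h1
    rcases hxor u v huv with ⟨_, h⟩ | ⟨_, h⟩
    · exact h h2
    · exact h h1
  -- find a good c
  have hgood : ∃ c : V, A b c ∧ ∀ v : V, {w | A v w} ≠ ({a, b, c} : Set V) := by
    by_contra h
    push_neg at h
    obtain ⟨c1, hc1, c2, hc2, hcc⟩ : ∃ c1 ∈ {w | A b w}, ∃ c2 ∈ {w | A b w}, c1 ≠ c2 := by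
      have h1 : 1 < ({w | A b w} : Set V).ncard := by have := hδ b; omega
      rw [Set.one_lt_ncard_iff (Set.toFinite _)] at h1
      obtain ⟨x, y, hx, hy, hxy⟩ := h1
      exact ⟨x, hx, y, hy, hxy⟩
    obtain ⟨v1, hv1⟩ := h c1 hc1
    obtain ⟨v2, hv2⟩ := h c2 hc2
    have hc1a : c1 ≠ a := by rintro rfl; exact hba hc1
    have hv12 : v1 ≠ v2 := by
      rintro rfl
      rw [hv1] at hv2
      have : c1 ∈ ({a, b, c2} : Set V) := by rw [← hv2]; simp
      rcases this with h' | h' | h'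
      · exact hc1a h'
      · exact hirr b (h' ▸ hc1)
      · exact hcc h'
    have aux : ∀ v1 c1 v2 : V, A b c1 → {w | A v1 w} = ({a, b, c1} : Set V) →
        A v1 a → A v2 a → A v2 b → A v1 v2 → False := by
      intro v1 c1 v2 hc1 hv1 hv1a hv2a hv2b h12
      have hx : v2 ∈ ({a, b, c1} : Set V) := hv1 ▸ h12
      rcases hx with h' | h' | h'
      · exact hirr a (h' ▸ hv2a)
      · exact hirr b (h' ▸ hv2b)
      · exact noboth b c1 hc1 (h' ▸ hv2b)
    have hv1a : A v1 a := by
      have : a ∈ {w | A v1 w} := by rw [hv1]; simp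
      exact this
    have hv1b : A v1 b := by
      have : b ∈ {w | A v1 w} := by rw [hv1]; simp
      exact this
    have hv2a : A v2 a := by
      have : a ∈ {w | A v2 w} := by rw [hv2]; simp
      exact this
    have hv2b : A v2 b := by
      have : b ∈ {w | A v2 w} := by rw [hv2]; simp
      exact this
    rcases hxor v1 v2 hv12 with ⟨h12, _⟩ | ⟨h21, _⟩
    · exact aux v1 c1 v2 hc1 hv1 hv1a hv2a hv2b h12
    · exact aux v2 c2 v1 hc2 hv2 hv2a hv1a hv1b h21
  obtain ⟨c, hbc, hc⟩ := hgood
  -- define the colouring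
  refine ⟨fun v => if v = a ∨ v = b ∨ v = c then 0 else 1, fun v => ?_⟩
  -- first find a 0-coloured out-neighbour
  have hca : c ≠ a := by intro h'; exact hba (h' ▸ hbc)
  have hcb : c ≠ b := by intro h'; exact hirr b (h' ▸ hbc)
  have h0 : ∃ u : V, A v u ∧ (u = a ∨ u = b ∨ u = c) := by
    by_cases hva : v = a
    · exact ⟨b, hva ▸ hab, Or.inr (Or.inl rfl)⟩
    by_cases hvb : v = b
    · exact ⟨c, hvb ▸ hbc, Or.inr (Or.inr rfl)⟩
    rcases hdom v hva hvb with h | h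
    · exact ⟨a, h, Or.inl rfl⟩
    · exact ⟨b, h, Or.inr (Or.inl rfl)⟩
  have h1 : ∃ w : V, A v w ∧ ¬ (w = a ∨ w = b ∨ w = c) := by
    by_contra h
    push_neg at h
    have hsub : {w | A v w} ⊆ ({a, b, c} : Set V) := by
      intro x hx
      rcases h x hx with h' | h' | h' <;> simp [h']
    have heq : {w | A v w} = ({a, b, c} : Set V) := by
      apply Set.eq_of_subset_of_ncard_le hsub _ (Set.toFinite _)
      calc ({a, b, c} : Set V).ncard ≤ ({c} : Set V).ncard + 1 + 1 := by
              refine le_trans (Set.ncard_insert_le _ _) ?_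
              exact Nat.add_le_add_right (Set.ncard_insert_le _ _) 1
        _ = 3 := by rw [Set.ncard_singleton]
        _ ≤ {w | A v w}.ncard := hδ v
    exact hc v heq
  obtain ⟨u, hvu, hu⟩ := h0
  obtain ⟨w, hvw, hw⟩ := h1
  refine ⟨u, w, hvu, hvw, ?_⟩
  simp only [if_pos hu, if_neg hw]
  decide


/-- Every tournament with minimum out-degree at least 3 which has an in-dominating set
of size 2 admits a 2-out-colouring. -/
theorem stmt3 {V : Type*} [Fintype V] (A : V → V → Prop) (hT : IsTournament A)
    (hδ : ∀ v : V, 3 ≤ {w | A v w}.ncard)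
    (hdom : ∃ a b : V, a ≠ b ∧ ∀ u : V, u ≠ a → u ≠ b → A u a ∨ A u b) :
    HasOutColouring A 2 := by
  obtain ⟨a, b, hne, hdom⟩ := hdom
  rcases hT.2 a b hne with ⟨h, _⟩ | ⟨h, _⟩
  · exact key_lemma A hT hδ a b h hdom
  · exact key_lemma A hT hδ b a h (fun u hu1 hu2 => (hdom u hu2 hu1).symm)
end

section
/- Every semicomplete digraph T with minimum out-degree at least 3 which admits an in-dominating set of size 2 has a 2-out-colouring. -/
/-- A semicomplete digraph: no loops, and every pair of distinct vertices is joined by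
at least one arc (possibly one in each direction). -/
def IsSemicomplete {V : Type*} (A : V → V → Prop) : Prop :=
  (∀ v : V, ¬ A v v) ∧ ∀ u v : V, u ≠ v → A u v ∨ A v u

section Aux

variable {V : Type*} [Fintype V] {A : V → V → Prop}

/-- From out-degree at least 3, every vertex has an out-neighbour avoiding any two
given vertices. -/
private lemma exists_avoid (hδ : ∀ v : V, 3 ≤ {w | A v w}.ncard) (v p q : V) :
    ∃ w : V, A v w ∧ w ≠ p ∧ w ≠ q := by
  by_contra h
  push_neg at h
  have hsub : {w | A v w} ⊆ ({p, q} : Set V) := by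
    intro w hw
    rcases eq_or_ne w p with rfl | hp
    · exact Set.mem_insert _ _
    · simp [h w hw hp]
  have hle : ({w | A v w}).ncard ≤ 2 := by
    have h1 : ({w | A v w}).ncard ≤ ({p, q} : Set V).ncard :=
      Set.ncard_le_ncard hsub (Set.toFinite _)
    have h2 : ({p, q} : Set V).ncard ≤ 2 := by
      have := Set.ncard_insert_le p ({q} : Set V)
      simpa [Set.ncard_singleton] using this
    omega
  have := hδ v
  omega

omit [Fintype V] in
private lemma ncard_triple_le (x y d : V) : ({x, y, d} : Set V).ncard ≤ 3 := by
  have h1 := Set.ncard_insert_le x ({y, d} : Set V)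
  have h2 := Set.ncard_insert_le y ({d} : Set V)
  simp only [Set.ncard_singleton] at h2
  omega

/-- The key construction: a set `C` such that every vertex has an out-neighbour in `C`
and an out-neighbour outside `C`, assuming the in-dominating pair `x, y` with `A x y`. -/
private lemma key (hirr : ∀ v : V, ¬ A v v) (hsemi : ∀ u v : V, u ≠ v → A u v ∨ A v u)
    (hδ : ∀ v : V, 3 ≤ {w | A v w}.ncard) (x y : V) (hxy : x ≠ y)
    (hdom : ∀ u : V, u ≠ x → u ≠ y → A u x ∨ A u y) (haxy : A x y) :
    ∃ C : Set V, ∀ v : V, (∃ u, A v u ∧ u ∈ C) ∧ (∃ w, A v w ∧ w ∉ C) := by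
  by_cases hyx : A y x
  · -- both arcs between x and y : colour class {x, y} works
    refine ⟨({x, y} : Set V), fun v => ⟨?_, ?_⟩⟩
    · rcases eq_or_ne v x with rfl | hvx
      · exact ⟨y, haxy, by simp⟩
      rcases eq_or_ne v y with rfl | hvy
      · exact ⟨x, hyx, by simp⟩
      rcases hdom v hvx hvy with h | h
      · exact ⟨x, h, by simp⟩
      · exact ⟨y, h, by simp⟩
    · obtain ⟨w, hw, h1, h2⟩ := exists_avoid hδ v x y
      exact ⟨w, hw, by simp [h1, h2]⟩
  · by_cases hX : ∀ u : V, u ≠ x → u ≠ y → A u y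
    · -- every vertex other than x, y has an arc to y; colour class {y, e}ᶜ works
      obtain ⟨e, hye, _, _⟩ := exists_avoid hδ y x x
      refine ⟨({y, e} : Set V)ᶜ, fun v => ⟨?_, ?_⟩⟩
      · obtain ⟨w, hw, h1, h2⟩ := exists_avoid hδ v y e
        exact ⟨w, hw, by simp [h1, h2]⟩
      · rcases eq_or_ne v x with rfl | hvx
        · exact ⟨y, haxy, by simp⟩
        rcases eq_or_ne v y with rfl | hvy
        · exact ⟨e, hye, by simp⟩
        · exact ⟨y, hX v hvx hvy, by simp⟩
    · -- there is g with no arc to y; find a good third vertex d and use {x, y, d}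
      push_neg at hX
      obtain ⟨g, hgx, hgy, hgny⟩ := hX
      have hyg : A y g := (hsemi y g (Ne.symm hgy)).resolve_right hgny
      -- two further distinct out-neighbours of y
      have hgsub : ({g} : Set V) ⊆ {w | A y w} := by simp [hyg]
      have hcard : 1 < ({w | A y w} \ {g}).ncard := by
        rw [Set.ncard_diff hgsub (Set.toFinite _)]
        have := hδ y
        simp only [Set.ncard_singleton]
        omega
      obtain ⟨d2, hd2, d3, hd3, hne23⟩ := (Set.one_lt_ncard (Set.toFinite _)).mp hcard
      simp only [Set.mem_diff, Set.mem_setOf_eq, Set.mem_singleton_iff] at hd2 hd3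
      obtain ⟨hyd2, hd2g⟩ := hd2
      obtain ⟨hyd3, hd3g⟩ := hd3
      -- basic distinctness facts
      have hd2y : d2 ≠ y := fun h => hirr y (h ▸ hyd2)
      have hd3y : d3 ≠ y := fun h => hirr y (h ▸ hyd3)
      have hd2x : d2 ≠ x := fun h => hyx (h ▸ hyd2)
      have hd3x : d3 ≠ x := fun h => hyx (h ▸ hyd3)
      -- main claim: one of g, d2, d3 is "good"
      have main : ∃ d : V, A y d ∧ d ≠ x ∧ d ≠ y ∧
          ∀ v : V, ¬ ({w | A v w} ⊆ ({x, y, d} : Set V)) := by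
        by_contra hbad
        push_neg at hbad
        obtain ⟨v1, hv1⟩ := hbad g hyg hgx hgy
        obtain ⟨v2, hv2⟩ := hbad d2 hyd2 hd2x hd2y
        obtain ⟨v3, hv3⟩ := hbad d3 hyd3 hd3x hd3y
        -- the out-neighbourhoods are exactly the triples
        have eq1 : {w | A v1 w} = ({x, y, g} : Set V) :=
          Set.eq_of_subset_of_ncard_le hv1
            (le_trans (ncard_triple_le x y g) (hδ v1)) (Set.toFinite _)
        have eq2 : {w | A v2 w} = ({x, y, d2} : Set V) :=
          Set.eq_of_subset_of_ncard_le hv2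
            (le_trans (ncard_triple_le x y d2) (hδ v2)) (Set.toFinite _)
        have eq3 : {w | A v3 w} = ({x, y, d3} : Set V) :=
          Set.eq_of_subset_of_ncard_le hv3
            (le_trans (ncard_triple_le x y d3) (hδ v3)) (Set.toFinite _)
        have hv1x : A v1 x := by rw [Set.ext_iff] at eq1; exact (eq1 x).mpr (by simp)
        have hv1y : A v1 y := by rw [Set.ext_iff] at eq1; exact (eq1 y).mpr (by simp)
        have hv2x : A v2 x := by rw [Set.ext_iff] at eq2; exact (eq2 x).mpr (by simp)
        have hv2y : A v2 y := by rw [Set.ext_iff] at eq2; exact (eq2 y).mpr (by simp)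
        have hv2d : A v2 d2 := by rw [Set.ext_iff] at eq2; exact (eq2 d2).mpr (by simp)
        have hv3x : A v3 x := by rw [Set.ext_iff] at eq3; exact (eq3 x).mpr (by simp)
        have hv3y : A v3 y := by rw [Set.ext_iff] at eq3; exact (eq3 y).mpr (by simp)
        have hv3d : A v3 d3 := by rw [Set.ext_iff] at eq3; exact (eq3 d3).mpr (by simp)
        -- v₂, v₃ are not x, y or g
        have hv2nx : v2 ≠ x := fun h => hirr x (h ▸ hv2x)
        have hv2ny : v2 ≠ y := fun h => hirr y (h ▸ hv2y)
        have hv2ng : v2 ≠ g := fun h => hgny (h ▸ hv2y)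
        have hv3nx : v3 ≠ x := fun h => hirr x (h ▸ hv3x)
        have hv3ny : v3 ≠ y := fun h => hirr y (h ▸ hv3y)
        have hv3ng : v3 ≠ g := fun h => hgny (h ▸ hv3y)
        -- v1 ≠ v2 and v1 ≠ v3
        have h12 : v1 ≠ v2 := by
          intro h
          have : A v1 d2 := h ▸ hv2d
          have : d2 ∈ ({x, y, g} : Set V) := eq1 ▸ this
          simp only [Set.mem_insert_iff, Set.mem_singleton_iff] at this
          rcases this with h' | h' | h' <;> [exact hd2x h'; exact hd2y h'; exact hd2g h']
        have h13 : v1 ≠ v3 := by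
          intro h
          have : A v1 d3 := h ▸ hv3d
          have : d3 ∈ ({x, y, g} : Set V) := eq1 ▸ this
          simp only [Set.mem_insert_iff, Set.mem_singleton_iff] at this
          rcases this with h' | h' | h' <;> [exact hd3x h'; exact hd3y h'; exact hd3g h']
        -- from semicompleteness: v1 = d2 and v1 = d3
        have hv1d2 : v1 = d2 := by
          rcases hsemi v1 v2 h12 with h | h
          · have : v2 ∈ ({x, y, g} : Set V) := eq1 ▸ h
            simp only [Set.mem_insert_iff, Set.mem_singleton_iff] at this
            rcases this with h' | h' | h' <;>
              [exact absurd h' hv2nx; exact absurd h' hv2ny; exact absurd h' hv2ng]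
          · have : v1 ∈ ({x, y, d2} : Set V) := eq2 ▸ h
            simp only [Set.mem_insert_iff, Set.mem_singleton_iff] at this
            rcases this with h' | h' | h'
            · exact absurd h' (fun h'' => hirr x (h'' ▸ hv1x))
            · exact absurd h' (fun h'' => hirr y (h'' ▸ hv1y))
            · exact h'
        have hv1d3 : v1 = d3 := by
          rcases hsemi v1 v3 h13 with h | h
          · have : v3 ∈ ({x, y, g} : Set V) := eq1 ▸ h
            simp only [Set.mem_insert_iff, Set.mem_singleton_iff] at this
            rcases this with h' | h' | h' <;>
              [exact absurd h' hv3nx; exact absurd h' hv3ny; exact absurd h' hv3ng]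
          · have : v1 ∈ ({x, y, d3} : Set V) := eq3 ▸ h
            simp only [Set.mem_insert_iff, Set.mem_singleton_iff] at this
            rcases this with h' | h' | h'
            · exact absurd h' (fun h'' => hirr x (h'' ▸ hv1x))
            · exact absurd h' (fun h'' => hirr y (h'' ▸ hv1y))
            · exact h'
        exact hne23 (hv1d2 ▸ hv1d3 ▸ rfl)
      obtain ⟨d, hyd, _, _, hgood⟩ := main
      refine ⟨({x, y, d} : Set V), fun v => ⟨?_, ?_⟩⟩
      · rcases eq_or_ne v x with rfl | hvx
        · exact ⟨y, haxy, by simp⟩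
        rcases eq_or_ne v y with rfl | hvy
        · exact ⟨d, hyd, by simp⟩
        rcases hdom v hvx hvy with h | h
        · exact ⟨x, h, by simp⟩
        · exact ⟨y, h, by simp⟩
      · have := hgood v
        rw [Set.not_subset] at this
        obtain ⟨w, hw, hwn⟩ := this
        exact ⟨w, hw, hwn⟩

end Aux

/-- Every semicomplete digraph with minimum out-degree at least 3 which admits an
in-dominating set of size 2 has a 2-out-colouring. -/
theorem stmt6 {V : Type*} [Fintype V] (A : V → V → Prop) (hT : IsSemicomplete A)
    (hδ : ∀ v : V, 3 ≤ {w | A v w}.ncard)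
    (hdom : ∃ a b : V, a ≠ b ∧ ∀ u : V, u ≠ a → u ≠ b → A u a ∨ A u b) :
    HasOutColouring A 2 := by
  classical
  obtain ⟨hirr, hsemi⟩ := hT
  obtain ⟨a, b, hab, hdom⟩ := hdom
  have hkey : ∃ C : Set V, ∀ v : V, (∃ u, A v u ∧ u ∈ C) ∧ (∃ w, A v w ∧ w ∉ C) := by
    rcases hsemi a b hab with h | h
    · exact key hirr hsemi hδ a b hab hdom h
    · exact key hirr hsemi hδ b a hab.symm (fun u h1 h2 => (hdom u h2 h1).symm) h
  obtain ⟨C, hC⟩ := hkey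
  refine ⟨fun v => if v ∈ C then 0 else 1, fun v => ?_⟩
  obtain ⟨⟨u, hu, huC⟩, ⟨w, hw, hwC⟩⟩ := hC v
  refine ⟨u, w, hu, hw, ?_⟩
  simp only [if_pos huC, if_neg hwC]
  decide
end

section
/- Every semicomplete digraph with minimum out-degree at least 2 admits a 3-out-colouring. -/
/-- Every semicomplete digraph with minimum out-degree at least 2 admits a
3-out-colouring. -/
theorem stmt8 {V : Type*} [Fintype V] (A : V → V → Prop) (hT : IsSemicomplete A)
    (hδ : ∀ v : V, 2 ≤ {w | A v w}.ncard) :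
    HasOutColouring A 3 := by
  classical
  obtain ⟨hloop, htot⟩ := hT
  rcases isEmpty_or_nonempty V with hV | hV
  · exact ⟨fun _ => 0, fun v => (hV.false v).elim⟩
  -- out-neighbourhoods as finsets
  set N : V → Finset V := fun v => Finset.univ.filter (fun w => A v w) with hNdef
  have hmemN : ∀ v w : V, w ∈ N v ↔ A v w := by
    intro v w; simp [hNdef]
  have hN2 : ∀ v, 2 ≤ (N v).card := by
    intro v
    have h1 : {w | A v w} = ((N v : Finset V) : Set V) := by
      ext w; simp [hNdef]
    have h2 := hδ v
    rwa [h1, Set.ncard_coe_finset] at h2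
  have hNne : ∀ v, (N v).Nonempty := fun v =>
    Finset.card_pos.mp (by have := hN2 v; omega)
  -- take a minimum-size transversal S of the family of out-neighbourhoods
  obtain ⟨S, hSmem, hSmin'⟩ := Finset.exists_min_image
      ((Finset.univ : Finset (Finset V)).filter (fun S => ∀ v, ((N v) ∩ S).Nonempty))
      Finset.card
      ⟨Finset.univ, by
        simp only [Finset.mem_filter, Finset.mem_univ, true_and]
        intro v; simpa using hNne v⟩
  have hS : ∀ v, ((N v) ∩ S).Nonempty := (Finset.mem_filter.mp hSmem).2
  have hSmin : ∀ S' : Finset V, (∀ v, ((N v) ∩ S').Nonempty) → S.card ≤ S'.card := by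
    intro S' h
    exact hSmin' S' (Finset.mem_filter.mpr ⟨Finset.mem_univ _, h⟩)
  have hSne : S.Nonempty := by
    obtain ⟨c, hc⟩ := hS hV.some
    exact ⟨c, (Finset.mem_inter.mp hc).2⟩
  -- minimality: for each b ∈ S there is u with N u ∩ S = {b}
  have hmin' : ∀ b ∈ S, ∃ u, (N u) ∩ S = {b} := by
    intro b hb
    have hlt : (S.erase b).card < S.card := Finset.card_erase_lt_of_mem hb
    have hnot : ¬ (∀ v, ((N v) ∩ (S.erase b)).Nonempty) := by
      intro h
      exact absurd (hSmin _ h) (by omega)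
    push_neg at hnot
    obtain ⟨u, hu⟩ := hnot
    refine ⟨u, ?_⟩
    have hbu : b ∈ (N u) ∩ S := by
      obtain ⟨c, hc⟩ := hS u
      obtain ⟨hc1, hc2⟩ := Finset.mem_inter.mp hc
      have : c = b := by
        by_contra hcb
        have : c ∈ (N u) ∩ (S.erase b) :=
          Finset.mem_inter.mpr ⟨hc1, Finset.mem_erase.mpr ⟨hcb, hc2⟩⟩
        rw [hu] at this
        exact absurd this (Finset.notMem_empty c)
      exact this ▸ hc
    apply Finset.Subset.antisymm
    · intro c hc
      obtain ⟨hc1, hc2⟩ := Finset.mem_inter.mp hc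
      rw [Finset.mem_singleton]
      by_contra hcb
      have : c ∈ (N u) ∩ (S.erase b) :=
        Finset.mem_inter.mpr ⟨hc1, Finset.mem_erase.mpr ⟨hcb, hc2⟩⟩
      rw [hu] at this
      exact absurd this (Finset.notMem_empty c)
    · intro c hc
      rw [Finset.mem_singleton] at hc
      exact hc ▸ hbu
  -- every vertex outside S dominates every vertex of S with out-neighbourhood inside S
  have SF : ∀ y v : V, y ∉ S → v ∈ S → N v ⊆ S → v ∈ N y := by
    intro y v hy hv hNv
    have hne : v ≠ y := fun h => hy (h ▸ hv)
    rcases htot v y hne with h | h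
    · exact absurd (hNv ((hmemN v y).mpr h)) hy
    · exact (hmemN y v).mpr h
  -- the key lemma: some b ∈ S is contained in every out-neighbourhood lying inside S
  have key : ∃ b ∈ S, ∀ v, ¬ ((N v) ⊆ S.erase b) := by
    by_contra hcon
    push_neg at hcon
    -- hcon : ∀ b ∈ S, ∃ v, N v ⊆ S.erase b
    set KS : Finset V := S.filter (fun v => N v ⊆ S) with hKSdef
    have hKSmem : ∀ v, v ∈ KS ↔ v ∈ S ∧ N v ⊆ S := by
      intro v; simp [hKSdef]
    by_cases hks : 2 ≤ KS.card
    · -- Case A: at least two vertices of S have out-neighbourhood inside S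
      obtain ⟨v₁, hv₁, v₂, hv₂, hv12⟩ := Finset.one_lt_card.mp (show 1 < KS.card by omega)
      obtain ⟨hv₁S, hNv₁⟩ := (hKSmem v₁).mp hv₁
      obtain ⟨hv₂S, hNv₂⟩ := (hKSmem v₂).mp hv₂
      have hA : ∀ b ∈ S, ∃ u, u ∈ S ∧ (N u) ∩ S = {b} := by
        intro b hb
        obtain ⟨u, hu⟩ := hmin' b hb
        refine ⟨u, ?_, hu⟩
        by_contra huS
        have h1 : v₁ ∈ (N u) ∩ S := Finset.mem_inter.mpr ⟨SF u v₁ huS hv₁S hNv₁, hv₁S⟩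
        have h2 : v₂ ∈ (N u) ∩ S := Finset.mem_inter.mpr ⟨SF u v₂ huS hv₂S hNv₂, hv₂S⟩
        rw [hu, Finset.mem_singleton] at h1 h2
        exact hv12 (h1.trans h2.symm)
      have hch : ∀ b : V, ∃ u : V, b ∈ S → (u ∈ S ∧ (N u) ∩ S = {b}) := by
        intro b
        by_cases hb : b ∈ S
        · obtain ⟨u, h⟩ := hA b hb; exact ⟨u, fun _ => h⟩
        · exact ⟨b, fun h => absurd h hb⟩
      choose f hf using hch
      have hsurj := Finset.surj_on_of_inj_on_of_card_le (s := S) (t := S)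
          (fun a _ => f a) (fun a ha => (hf a ha).1)
          (fun a₁ a₂ ha₁ ha₂ h => by
            have e1 := (hf a₁ ha₁).2
            have e2 := (hf a₂ ha₂).2
            have h' : f a₁ = f a₂ := h
            rw [h', e2] at e1
            exact (Finset.singleton_injective e1).symm)
          le_rfl
      obtain ⟨b, hbS, hbe⟩ := hsurj v₁ hv₁S
      have hNv₁S : (N v₁) ∩ S = {b} := by
        rw [hbe]; exact (hf b hbS).2
      have hsub : N v₁ ⊆ {b} := by
        intro c hc
        rw [← hNv₁S]
        exact Finset.mem_inter.mpr ⟨hc, hNv₁ hc⟩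
      have := Finset.card_le_card hsub
      rw [Finset.card_singleton] at this
      have := hN2 v₁
      omega
    · -- Case B: at most one vertex of S has out-neighbourhood inside S
      have hKS1 : ∀ a b : V, a ∈ KS → b ∈ KS → a = b := by
        intro a b ha hb
        by_contra hab
        exact hks (Finset.one_lt_card.mpr ⟨a, ha, b, hb, hab⟩)
      -- core contradiction: p ∈ S, q ∉ S, both with out-neighbourhoods inside S
      have core : ∀ p q : V, p ∈ S → q ∉ S → N p ⊆ S → N q ⊆ S → p ≠ q → False := by
        intro p q hpS hqS hNp hNq hpq
        have hpKS : p ∈ KS := (hKSmem p).mpr ⟨hpS, hNp⟩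
        -- N p and N q are disjoint
        have hdisj : ∀ c, c ∈ N p → c ∈ N q → False := by
          intro c hcp hcq
          have hcS : c ∈ S := hNp hcp
          obtain ⟨z, hz⟩ := hcon c hcS
          have hNzS : N z ⊆ S := hz.trans (Finset.erase_subset _ _)
          have hcz : c ∉ N z := by
            intro h
            exact (Finset.mem_erase.mp (hz h)).1 rfl
          by_cases hzS : z ∈ S
          · have : z = p := hKS1 z p ((hKSmem z).mpr ⟨hzS, hNzS⟩) hpKS
            exact hcz (this ▸ hcp)
          · have hzq : z ≠ q := fun h => hcz (h ▸ hcq)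
            rcases htot z q hzq with h | h
            · exact hqS (hNzS ((hmemN z q).mpr h))
            · exact hzS (hNq ((hmemN q z).mpr h))
        have hpNq : p ∈ N q := SF q p hqS hpS hNp
        -- find c ∈ N q with c ≠ p
        obtain ⟨a₁, ha₁, a₂, ha₂, h12⟩ := Finset.one_lt_card.mp
          (by have := hN2 q; omega : 1 < (N q).card)
        obtain ⟨c, hcNq, hcp⟩ : ∃ c, c ∈ N q ∧ c ≠ p := by
          by_cases h : a₁ = p
          · exact ⟨a₂, ha₂, fun hh => h12 (h.trans hh.symm ▸ rfl)⟩
          · exact ⟨a₁, ha₁, h⟩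
        have hcS : c ∈ S := hNq hcNq
        have hpNc : p ∈ N c := by
          rcases htot p c (fun h => hcp (h.symm)) with h | h
          · exact absurd ((hmemN p c).mpr h) (fun hh => hdisj c hh hcNq)
          · exact (hmemN c p).mpr h
        -- the injective map b ↦ u_b on S.erase p
        have hB : ∀ b ∈ S.erase p, ∃ u, u ∈ S.erase p ∧ (N u) ∩ S = {b} := by
          intro b hb
          obtain ⟨hbp, hbS⟩ := Finset.mem_erase.mp hb
          obtain ⟨u, hu⟩ := hmin' b hbS
          have huS : u ∈ S := by
            by_contra huS
            have : p ∈ (N u) ∩ S := Finset.mem_inter.mpr ⟨SF u p huS hpS hNp, hpS⟩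
            rw [hu, Finset.mem_singleton] at this
            exact hbp this.symm
          have hup : u ≠ p := by
            intro h
            subst h
            have hsub : N u ⊆ {b} := by
              intro d hd
              rw [← hu]
              exact Finset.mem_inter.mpr ⟨hd, hNp hd⟩
            have := Finset.card_le_card hsub
            rw [Finset.card_singleton] at this
            have := hN2 u
            omega
          exact ⟨u, Finset.mem_erase.mpr ⟨hup, huS⟩, hu⟩
        have hch : ∀ b : V, ∃ u : V, b ∈ S.erase p → (u ∈ S.erase p ∧ (N u) ∩ S = {b}) := by
          intro b
          by_cases hb : b ∈ S.erase p
          · obtain ⟨u, h⟩ := hB b hb; exact ⟨u, fun _ => h⟩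
          · exact ⟨b, fun h => absurd h hb⟩
        choose f hf using hch
        have hsurj := Finset.surj_on_of_inj_on_of_card_le (s := S.erase p) (t := S.erase p)
            (fun a _ => f a) (fun a ha => (hf a ha).1)
            (fun a₁ a₂ ha₁ ha₂ h => by
              have e1 := (hf a₁ ha₁).2
              have e2 := (hf a₂ ha₂).2
              have h' : f a₁ = f a₂ := h
              rw [h', e2] at e1
              exact (Finset.singleton_injective e1).symm)
            le_rfl
        have hcE : c ∈ S.erase p := Finset.mem_erase.mpr ⟨hcp, hcS⟩
        obtain ⟨b, hbE, hbe⟩ := hsurj c hcE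
        have hNcS : (N c) ∩ S = {b} := by rw [hbe]; exact (hf b hbE).2
        have : p ∈ (N c) ∩ S := Finset.mem_inter.mpr ⟨hpNc, hpS⟩
        rw [hNcS, Finset.mem_singleton] at this
        exact (Finset.mem_erase.mp hbE).1 this.symm
      -- produce two distinct vertices with out-neighbourhoods inside S
      obtain ⟨b₀, hb₀⟩ := hSne
      obtain ⟨v, hv⟩ := hcon b₀ hb₀
      have hNvS : N v ⊆ S := hv.trans (Finset.erase_subset _ _)
      obtain ⟨b₁, hb₁⟩ := hNne v
      have hb₁S : b₁ ∈ S := hNvS hb₁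
      obtain ⟨w, hw⟩ := hcon b₁ hb₁S
      have hNwS : N w ⊆ S := hw.trans (Finset.erase_subset _ _)
      have hvw : v ≠ w := by
        intro h
        subst h
        exact (Finset.mem_erase.mp (hw hb₁)).1 rfl
      by_cases hvS : v ∈ S <;> by_cases hwS : w ∈ S
      · exact hvw (hKS1 v w ((hKSmem v).mpr ⟨hvS, hNvS⟩) ((hKSmem w).mpr ⟨hwS, hNwS⟩))
      · exact core v w hvS hwS hNvS hNwS hvw
      · exact core w v hwS hvS hNwS hNvS hvw.symm
      · rcases htot v w hvw with h | h
        · exact hwS (hNvS ((hmemN v w).mpr h))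
        · exact hvS (hNwS ((hmemN w v).mpr h))
  -- construct the colouring
  obtain ⟨b, hbS, hb⟩ := key
  refine ⟨fun u => if u = b then 2 else if u ∈ S then 1 else 0, fun v => ?_⟩
  by_cases hbv : b ∈ N v
  · -- v sees b (colour 2) and some other vertex (colour 0 or 1)
    obtain ⟨a₁, ha₁, a₂, ha₂, h12⟩ := Finset.one_lt_card.mp
      (by have := hN2 v; omega : 1 < (N v).card)
    obtain ⟨w, hwN, hwb⟩ : ∃ w, w ∈ N v ∧ w ≠ b := by
      by_cases h : a₁ = b
      · exact ⟨a₂, ha₂, fun hh => h12 (h.trans hh.symm ▸ rfl)⟩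
      · exact ⟨a₁, ha₁, h⟩
    refine ⟨b, w, (hmemN v b).mp hbv, (hmemN v w).mp hwN, ?_⟩
    simp only [if_pos rfl, if_neg hwb]
    by_cases hwS : w ∈ S <;> simp [hwS]
  · -- v sees a vertex of S \ {b} (colour 1) and a vertex outside S (colour 0)
    obtain ⟨u, hu⟩ := hS v
    obtain ⟨huN, huS⟩ := Finset.mem_inter.mp hu
    have hub : u ≠ b := fun h => hbv (h ▸ huN)
    obtain ⟨w, hwN, hwE⟩ := Finset.not_subset.mp (hb v)
    have hwb : w ≠ b := fun h => hbv (h ▸ hwN)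
    have hwS : w ∉ S := fun h => hwE (Finset.mem_erase.mpr ⟨hwb, h⟩)
    refine ⟨u, w, (hmemN v u).mp huN, (hmemN v w).mp hwN, ?_⟩
    simp only [if_neg hub, if_pos huS, if_neg hwb, if_neg hwS]
    decide
end

section
/- Every semicomplete digraph on at least 7 vertices admits a 2-out-colouring if and only if it admits a balanced 2-out-colouring. -/
/-- `γ` is an out-colouring: no out-neighbourhood is monochromatic. -/
def IsOutColouring {V : Type*} (A : V → V → Prop) {r : ℕ} (γ : V → Fin r) : Prop :=
  ∀ v : V, ∃ u w : V, A v u ∧ A v w ∧ γ u ≠ γ w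

set_option linter.unusedSectionVars false
namespace Stmt9

variable {V : Type*} [Fintype V] [DecidableEq V]

/-- `X` is a good colour class: every vertex has an out-neighbour in `X` and one outside. -/
def Good (A : V → V → Prop) (X : Finset V) : Prop :=
  ∀ v : V, (∃ u ∈ X, A v u) ∧ (∃ u, u ∉ X ∧ A v u)

variable {A : V → V → Prop}

theorem arc_or (hsc : IsSemicomplete A) {u v : V} (h : u ≠ v) : A u v ∨ A v u :=
  hsc.2 u v h

theorem arc_of_not (hsc : IsSemicomplete A) {u v : V} (h : u ≠ v) (h2 : ¬ A v u) : A u v := by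
  rcases hsc.2 u v h with h' | h'
  · exact h'
  · exact absurd h' h2

theorem no_loop (hsc : IsSemicomplete A) (v : V) : ¬ A v v := hsc.1 v

/-- Single move: delete an unblocked vertex from `X`. -/
theorem move1 {X : Finset V} {x : V} (hx : x ∈ X)
    (hg : Good A X)
    (hnb : ∀ v, ∃ u ∈ X, u ≠ x ∧ A v u) :
    ∃ X' : Finset V, Good A X' ∧ X'.card + 1 = X.card := by
  refine ⟨X.erase x, ?_, ?_⟩
  · intro v
    constructor
    · obtain ⟨u, hu, hux, hA⟩ := hnb v
      exact ⟨u, Finset.mem_erase.2 ⟨hux, hu⟩, hA⟩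
    · obtain ⟨u, hu, hA⟩ := (hg v).2
      exact ⟨u, fun hc => hu (Finset.mem_of_mem_erase hc), hA⟩
  · exact Finset.card_erase_add_one hx

/-- Master move: delete `r1, r2` from `X`, add `y1`. -/
theorem master (hsc : IsSemicomplete A) {X : Finset V} {r1 r2 y1 : V}
    (hg : Good A X)
    (hr1 : r1 ∈ X) (hr2 : r2 ∈ X) (hne : r1 ≠ r2) (hy1 : y1 ∉ X)
    (M1 : ∀ v ∈ X, v ≠ r1 → v ≠ r2 → (∃ u ∈ X, u ≠ r1 ∧ u ≠ r2 ∧ A v u) ∨ A v y1)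
    (M2 : ∀ v ∈ X, v ≠ r1 → v ≠ r2 → (∃ u, u ∉ X ∧ u ≠ y1 ∧ A v u) ∨ A v r1 ∨ A v r2)
    (M3 : ∀ y, y ∉ X → y ≠ y1 → (∃ u ∈ X, u ≠ r1 ∧ u ≠ r2 ∧ A y u) ∨ A y y1)
    (M4 : ∀ y, y ∉ X → y ≠ y1 → (∃ u, u ∉ X ∧ u ≠ y1 ∧ A y u) ∨ A y r1 ∨ A y r2)
    (M5a : (∃ u ∈ X, u ≠ r1 ∧ u ≠ r2 ∧ A r1 u) ∨ A r1 y1)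
    (M5b : (∃ u, u ∉ X ∧ u ≠ y1 ∧ A r1 u) ∨ A r1 r2)
    (M6a : (∃ u ∈ X, u ≠ r1 ∧ u ≠ r2 ∧ A r2 u) ∨ A r2 y1)
    (M6b : (∃ u, u ∉ X ∧ u ≠ y1 ∧ A r2 u) ∨ A r2 r1)
    (M7a : ∃ u ∈ X, u ≠ r1 ∧ u ≠ r2 ∧ A y1 u) :
    ∃ X' : Finset V, Good A X' ∧ X'.card + 1 = X.card := by
  classical
  set X' : Finset V := insert y1 ((X.erase r1).erase r2) with hX'
  have hymem : ∀ u, u ∈ X' ↔ (u = y1 ∨ (u ∈ X ∧ u ≠ r1 ∧ u ≠ r2)) := by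
    intro u
    simp only [hX', Finset.mem_insert, Finset.mem_erase]
    tauto
  have hIn : ∀ u, u ∈ X → u ≠ r1 → u ≠ r2 → u ∈ X' := fun u h h1 h2 =>
    (hymem u).2 (Or.inr ⟨h, h1, h2⟩)
  have hy1' : y1 ∈ X' := (hymem y1).2 (Or.inl rfl)
  have hr1' : r1 ∉ X' := by
    rw [hymem]
    rintro (h | ⟨_, h, _⟩)
    · exact hy1 (h ▸ hr1)
    · exact h rfl
  have hr2' : r2 ∉ X' := by
    rw [hymem]
    rintro (h | ⟨_, _, h⟩)
    · exact hy1 (h ▸ hr2)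
    · exact h rfl
  have hOut : ∀ u, u ∉ X → u ≠ y1 → u ∉ X' := by
    intro u h h1 hc
    rcases (hymem u).1 hc with h' | ⟨h', _⟩
    · exact h1 h'
    · exact h h'
  refine ⟨X', ?_, ?_⟩
  · intro v
    by_cases hv1 : v = r1
    · subst hv1
      constructor
      · rcases M5a with ⟨u, hu, h1, h2, hA⟩ | hA
        · exact ⟨u, hIn u hu h1 h2, hA⟩
        · exact ⟨y1, hy1', hA⟩
      · rcases M5b with ⟨u, hu, h1, hA⟩ | hA
        · exact ⟨u, hOut u hu h1, hA⟩
        · exact ⟨r2, hr2', hA⟩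
    by_cases hv2 : v = r2
    · subst hv2
      constructor
      · rcases M6a with ⟨u, hu, h1, h2, hA⟩ | hA
        · exact ⟨u, hIn u hu h1 h2, hA⟩
        · exact ⟨y1, hy1', hA⟩
      · rcases M6b with ⟨u, hu, h1, hA⟩ | hA
        · exact ⟨u, hOut u hu h1, hA⟩
        · exact ⟨r1, hr1', hA⟩
    by_cases hvy : v = y1
    · constructor
      · obtain ⟨u, hu, h1, h2, hA⟩ := M7a
        exact ⟨u, hIn u hu h1 h2, hvy ▸ hA⟩
      · obtain ⟨u, hu, hA⟩ := (hg y1).2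
        have hne' : u ≠ y1 := fun h => (no_loop hsc y1) (h ▸ hA)
        exact ⟨u, hOut u hu hne', hvy ▸ hA⟩
    by_cases hvX : v ∈ X
    · constructor
      · rcases M1 v hvX hv1 hv2 with ⟨u, hu, h1, h2, hA⟩ | hA
        · exact ⟨u, hIn u hu h1 h2, hA⟩
        · exact ⟨y1, hy1', hA⟩
      · rcases M2 v hvX hv1 hv2 with ⟨u, hu, h1, hA⟩ | hA | hA
        · exact ⟨u, hOut u hu h1, hA⟩
        · exact ⟨r1, hr1', hA⟩
        · exact ⟨r2, hr2', hA⟩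
    · constructor
      · rcases M3 v hvX hvy with ⟨u, hu, h1, h2, hA⟩ | hA
        · exact ⟨u, hIn u hu h1 h2, hA⟩
        · exact ⟨y1, hy1', hA⟩
      · rcases M4 v hvX hvy with ⟨u, hu, h1, hA⟩ | hA | hA
        · exact ⟨u, hOut u hu h1, hA⟩
        · exact ⟨r1, hr1', hA⟩
        · exact ⟨r2, hr2', hA⟩
  · have h1 : y1 ∉ (X.erase r1).erase r2 := fun hc =>
      hy1 (Finset.mem_of_mem_erase (Finset.mem_of_mem_erase hc))
    have hr2e : r2 ∈ X.erase r1 := Finset.mem_erase.2 ⟨(Ne.symm hne), hr2⟩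
    rw [hX', Finset.card_insert_of_notMem h1]
    have e2 : ((X.erase r1).erase r2).card + 1 = (X.erase r1).card :=
      Finset.card_erase_add_one hr2e
    have e1 : (X.erase r1).card + 1 = X.card := Finset.card_erase_add_one hr1
    omega

/-- Selection of a "P-pair": an arc `p → t` outside `X` such that `p` is the only vertex
outside `X` whose out-neighbours outside `X` are exactly `{t}`. -/
theorem sel1 (hsc : IsSemicomplete A) {X : Finset V} (hq : 2 ≤ Xᶜ.card) :
    ∃ p t, p ∉ X ∧ t ∉ X ∧ A p t ∧
      ∀ z, z ∉ X → A z t → (∀ z', z' ∉ X → A z z' → z' = t) → z = p := by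
  by_cases hP : ∃ z t, z ∉ X ∧ t ∉ X ∧ A z t ∧ ∀ z', z' ∉ X → A z z' → z' = t
  · obtain ⟨p, t, hp, ht, hA, hu⟩ := hP
    refine ⟨p, t, hp, ht, hA, ?_⟩
    intro z hz hzt hzu
    by_contra hne
    rcases arc_or hsc (show z ≠ p from hne) with h | h
    · have e := hzu p hp h
      rw [e] at hA
      exact no_loop hsc t hA
    · have e := hu z hz h
      rw [e] at hzt
      exact no_loop hsc t hzt
  · have h2 : ∃ y ∈ Xᶜ, ∃ y' ∈ Xᶜ, y ≠ y' := Finset.one_lt_card.mp (by omega)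
    obtain ⟨y, hy, y', hy', hne⟩ := h2
    rw [Finset.mem_compl] at hy hy'
    rcases arc_or hsc hne with h | h
    · refine ⟨y, y', hy, hy', h, ?_⟩
      intro z hz hzt hzu
      exact absurd ⟨z, y', hz, hy', hzt, hzu⟩ hP
    · refine ⟨y', y, hy', hy, h, ?_⟩
      intro z hz hzt hzu
      exact absurd ⟨z, y, hz, hy, hzt, hzu⟩ hP

/-- Two distinct vertices cannot both have `t` as unique out-neighbour outside `X`. -/
theorem ppair_unique (hsc : IsSemicomplete A) {X : Finset V} {z z' t : V}
    (hz : z ∉ X) (hz' : z' ∉ X) (ht : t ∉ X)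
    (h1 : A z t) (hu1 : ∀ w, w ∉ X → A z w → w = t)
    (h2 : A z' t) (hu2 : ∀ w, w ∉ X → A z' w → w = t) (hne : z ≠ z') : False := by
  rcases arc_or hsc hne with h | h
  · have e := hu1 z' hz' h
    rw [e] at h2
    exact no_loop hsc t h2
  · have e := hu2 z hz h
    rw [e] at h1
    exact no_loop hsc t h1

/-- Three distinct vertices of `X` with unique out-neighbours in `X`
must form a directed triangle. -/
theorem three_class (hsc : IsSemicomplete A) {X : Finset V} {w1 w2 w3 t1 t2 t3 : V}
    (hw1 : w1 ∈ X) (hw2 : w2 ∈ X) (hw3 : w3 ∈ X)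
    (d12 : w1 ≠ w2) (d13 : w1 ≠ w3) (d23 : w2 ≠ w3)
    (h1 : A w1 t1 ∧ ∀ u ∈ X, A w1 u → u = t1)
    (h2 : A w2 t2 ∧ ∀ u ∈ X, A w2 u → u = t2)
    (h3 : A w3 t3 ∧ ∀ u ∈ X, A w3 u → u = t3) :
    (t1 = w2 ∧ t2 = w3 ∧ t3 = w1) ∨ (t1 = w3 ∧ t3 = w2 ∧ t2 = w1) := by
  have key : ∀ a b c : V, a ∈ X → b ∈ X → c ∈ X → a ≠ b → a ≠ c → b ≠ c →
      ∀ ta tb tc, (A a ta ∧ ∀ u ∈ X, A a u → u = ta) →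
      (A b tb ∧ ∀ u ∈ X, A b u → u = tb) →
      (A c tc ∧ ∀ u ∈ X, A c u → u = tc) → ta = b → tb = c ∧ tc = a := by
    intro a b c ha hb hc nab nac nbc ta tb tc hA hB hC htab
    have hbc : tb = c := by
      by_contra hbc
      have hnbc' : ¬ A b c := fun hh => hbc ((hB.2 c hc hh).symm)
      have hcb : A c b := arc_of_not hsc nbc.symm hnbc'
      have htc : tc = b := (hC.2 b hb hcb).symm
      rcases arc_or hsc nac with h | h
      · have e : c = ta := hA.2 c hc h
        exact nbc (htab.symm.trans e.symm)
      · have e : a = tc := hC.2 a ha h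
        exact nab (e.trans htc)
    refine ⟨hbc, ?_⟩
    by_contra hca
    have hnac' : ¬ A c a := fun hh => hca ((hC.2 a ha hh).symm)
    have hac : A a c := arc_of_not hsc nac hnac'
    have e : c = ta := hA.2 c hc hac
    exact nbc ((e.trans htab).symm)
  have ht1 : t1 = w2 ∨ t1 = w3 := by
    by_contra h
    push_neg at h
    have ha2 : A w2 w1 := arc_of_not hsc d12.symm (fun hh => h.1 ((h1.2 w2 hw2 hh).symm))
    have ha3 : A w3 w1 := arc_of_not hsc d13.symm (fun hh => h.2 ((h1.2 w3 hw3 hh).symm))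
    have e2 : w1 = t2 := h2.2 w1 hw1 ha2
    have e3 : w1 = t3 := h3.2 w1 hw1 ha3
    rcases arc_or hsc d23 with hh | hh
    · exact d13 (e2.trans (h2.2 w3 hw3 hh).symm)
    · exact d12 (e3.trans (h3.2 w2 hw2 hh).symm)
  rcases ht1 with h | h
  · left
    obtain ⟨e1, e2⟩ := key w1 w2 w3 hw1 hw2 hw3 d12 d13 d23 t1 t2 t3 h1 h2 h3 h
    exact ⟨h, e1, e2⟩
  · right
    obtain ⟨e1, e2⟩ := key w1 w3 w2 hw1 hw3 hw2 d13 d12 d23.symm t1 t3 t2 h1 h3 h2 h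
    exact ⟨h, e1, e2⟩
theorem no_four (hsc : IsSemicomplete A) {X : Finset V} {w1 w2 w3 w4 t1 t2 t3 t4 : V}
    (hw1 : w1 ∈ X) (hw2 : w2 ∈ X) (hw3 : w3 ∈ X) (hw4 : w4 ∈ X)
    (d12 : w1 ≠ w2) (d13 : w1 ≠ w3) (d14 : w1 ≠ w4)
    (d23 : w2 ≠ w3) (d24 : w2 ≠ w4) (d34 : w3 ≠ w4)
    (h1 : A w1 t1 ∧ ∀ u ∈ X, A w1 u → u = t1)
    (h2 : A w2 t2 ∧ ∀ u ∈ X, A w2 u → u = t2)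
    (h3 : A w3 t3 ∧ ∀ u ∈ X, A w3 u → u = t3)
    (h4 : A w4 t4 ∧ ∀ u ∈ X, A w4 u → u = t4) : False := by
  have key : ∀ a ta, a ∈ X → (A a ta ∧ ∀ u ∈ X, A a u → u = ta) → a ≠ w4 →
      a = t4 ∨ ta = w4 := by
    intro a ta ha hA hne
    rcases arc_or hsc (show w4 ≠ a from fun h => hne h.symm) with h | h
    · exact Or.inl (h4.2 a ha h)
    · exact Or.inr ((hA.2 w4 hw4 h).symm)
  have pairc : ∀ a b ta tb, a ∈ X → b ∈ X → a ≠ b → a ≠ w4 → b ≠ w4 →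
      (A a ta ∧ ∀ u ∈ X, A a u → u = ta) → (A b tb ∧ ∀ u ∈ X, A b u → u = tb) →
      ta = w4 → tb = w4 → False := by
    intro a b ta tb ha hb hab haw hbw hA hB hta htb
    rcases arc_or hsc hab with h | h
    · exact hbw ((hA.2 b hb h).trans hta)
    · exact haw ((hB.2 a ha h).trans htb)
  rcases key w1 t1 hw1 h1 d14 with e1 | e1
  · rcases key w2 t2 hw2 h2 d24 with e2 | e2
    · exact d12 (e1.trans e2.symm)
    · rcases key w3 t3 hw3 h3 d34 with e3 | e3
      · exact d13 (e1.trans e3.symm)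
      · exact pairc w2 w3 t2 t3 hw2 hw3 d23 d24 d34 h2 h3 e2 e3
  · rcases key w2 t2 hw2 h2 d24 with e2 | e2
    · rcases key w3 t3 hw3 h3 d34 with e3 | e3
      · exact d23 (e2.trans e3.symm)
      · exact pairc w1 w3 t1 t3 hw1 hw3 d13 d14 d34 h1 h3 e1 e3
    · exact pairc w1 w2 t1 t2 hw1 hw2 d12 d14 d24 h1 h2 e1 e2

theorem shape_cycle (hsc : IsSemicomplete A) {X : Finset V} (hg : Good A X)
    {s1 s2 s3 : V} {ξ : V → V}
    (hs1 : s1 ∈ X) (hs2 : s2 ∈ X) (hs3 : s3 ∈ X)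
    (n12 : s1 ≠ s2) (n13 : s1 ≠ s3) (n23 : s2 ≠ s3)
    (ho1 : A s1 s2 ∧ ∀ u ∈ X, A s1 u → u = s2)
    (ho2 : A s2 s3 ∧ ∀ u ∈ X, A s2 u → u = s3)
    (ho3 : A s3 s1 ∧ ∀ u ∈ X, A s3 u → u = s1)
    (hq : 2 ≤ Xᶜ.card)
    (hξ : ∀ y, y ∉ X → ξ y ∈ X ∧ ξ y ≠ s1 ∧ ξ y ≠ s2 ∧ ξ y ≠ s3 ∧ A y (ξ y) ∧
            ∀ u ∈ X, A y u → u = ξ y)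
    (hξinj : ∀ y y', y ∉ X → y' ∉ X → ξ y = ξ y' → y = y') :
    ∃ X', Good A X' ∧ X'.card + 1 = X.card := by
  have dom : ∀ y v, y ∉ X → v ∈ X → v ≠ ξ y → A v y := by
    intro y v hy hv hne
    refine arc_of_not hsc (fun h => hy (h ▸ hv)) ?_
    intro hA
    exact hne ((hξ y hy).2.2.2.2.2 v hv hA)
  have domS : ∀ s tn, (A s tn ∧ ∀ u ∈ X, A s u → u = tn) →
      ∀ v ∈ X, v ≠ s → v ≠ tn → A v s := by
    intro s tn hsout v hv hv1 hv2
    refine arc_of_not hsc hv1 ?_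
    intro hA
    exact hv2 (hsout.2 v hv hA)
  obtain ⟨p, t, hp, ht, hpt, huniq⟩ := sel1 hsc hq
  obtain ⟨hpX, hp1, hp2, hp3, hparc, hpuniq⟩ := hξ p hp
  obtain ⟨htX, ht1, ht2, ht3, htarc, htuniq⟩ := hξ t ht
  have hnept : p ≠ t := fun h => no_loop hsc t (h ▸ hpt)
  have hξne : ξ t ≠ ξ p := fun h => hnept (hξinj t p ht hp h).symm
  obtain ⟨z0, hz0c, z1, hz1c, hz01⟩ := Finset.one_lt_card.mp (show 1 < Xᶜ.card by omega)
  have hzpick : ∃ z, z ∉ X ∧ z ≠ t := by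
    by_cases h : z0 = t
    · exact ⟨z1, Finset.mem_compl.1 hz1c, fun hc => hz01 (h.trans hc.symm)⟩
    · exact ⟨z0, Finset.mem_compl.1 hz0c, h⟩
  obtain ⟨z, hzY, hzt⟩ := hzpick
  apply master hsc hg (r1 := ξ p) (r2 := s1) (y1 := t) hpX hs1 hp1 ht
  -- M1
  · intro v hv hv1 hv2
    by_cases hv3 : v = s3
    · exact Or.inr (dom t v ht hv (by rw [hv3]; exact fun h => ht3 h.symm))
    by_cases hvs2 : v = s2
    · exact Or.inl ⟨s3, hs3, fun h => hp3 h.symm, fun h => n13 h.symm, hvs2 ▸ ho2.1⟩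
    · exact Or.inl ⟨s2, hs2, fun h => hp2 h.symm, fun h => n12 h.symm,
        domS s2 s3 ho2 v hv hvs2 hv3⟩
  -- M2
  · intro v hv hv1 hv2
    by_cases hvs2 : v = s2
    · refine Or.inl ⟨z, hzY, hzt, dom z v hzY hv ?_⟩
      rw [hvs2]
      exact fun h => (hξ z hzY).2.2.1 h.symm
    · exact Or.inr (Or.inr (domS s1 s2 ho1 v hv hv2 hvs2))
  -- M3
  · intro y hy hyt
    by_cases hya : ξ y = ξ p
    · have : y = p := hξinj y p hy hp hya
      exact Or.inr (this ▸ hpt)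
    · exact Or.inl ⟨ξ y, (hξ y hy).1, hya, (hξ y hy).2.1, (hξ y hy).2.2.2.2.1⟩
  -- M4
  · intro y hy hyt
    by_cases hfull : ∀ z', z' ∉ X → A y z' → z' = t
    · have hyt' : A y t := by
        obtain ⟨u, hu, hA⟩ := (hg y).2
        have := hfull u hu hA
        exact this ▸ hA
      have : y = p := huniq y hy hyt' hfull
      exact Or.inr (Or.inl (this ▸ hparc))
    · push_neg at hfull
      obtain ⟨z', hz', hAz', hz't⟩ := hfull
      exact Or.inl ⟨z', hz', hz't, hAz'⟩
  -- M5a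
  · exact Or.inl ⟨s2, hs2, fun h => hp2 h.symm, fun h => n12 h.symm,
      domS s2 s3 ho2 (ξ p) hpX hp2 hp3⟩
  -- M5b
  · exact Or.inr (domS s1 s2 ho1 (ξ p) hpX hp1 hp2)
  -- M6a
  · exact Or.inl ⟨s2, hs2, fun h => hp2 h.symm, fun h => n12 h.symm, ho1.1⟩
  -- M6b
  · exact Or.inl ⟨z, hzY, hzt, dom z s1 hzY hs1 (fun h => (hξ z hzY).2.1 h.symm)⟩
  -- M7a
  · exact ⟨ξ t, htX, hξne, ht1, htarc⟩

theorem shape_digon (hsc : IsSemicomplete A) {X : Finset V} (hg : Good A X)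
    {u1 u2 : V} {ξ : V → V}
    (hu1 : u1 ∈ X) (hu2 : u2 ∈ X) (n12 : u1 ≠ u2)
    (ho1 : A u1 u2 ∧ ∀ u ∈ X, A u1 u → u = u2)
    (ho2 : A u2 u1 ∧ ∀ u ∈ X, A u2 u → u = u1)
    (hq : 2 ≤ Xᶜ.card)
    (hξ : ∀ y, y ∉ X → ξ y ∈ X ∧ ξ y ≠ u1 ∧ ξ y ≠ u2 ∧ A y (ξ y) ∧
            ∀ u ∈ X, A y u → u = ξ y)
    (hξinj : ∀ y y', y ∉ X → y' ∉ X → ξ y = ξ y' → y = y') :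
    ∃ X', Good A X' ∧ X'.card + 1 = X.card := by
  have dom : ∀ y v, y ∉ X → v ∈ X → v ≠ ξ y → A v y := by
    intro y v hy hv hne
    refine arc_of_not hsc (fun h => hy (h ▸ hv)) ?_
    intro hA
    exact hne ((hξ y hy).2.2.2.2 v hv hA)
  have domS : ∀ s tn, (A s tn ∧ ∀ u ∈ X, A s u → u = tn) →
      ∀ v ∈ X, v ≠ s → v ≠ tn → A v s := by
    intro s tn hsout v hv hv1 hv2
    refine arc_of_not hsc hv1 ?_
    intro hA
    exact hv2 (hsout.2 v hv hA)
  obtain ⟨p, t, hp, ht, hpt, huniq⟩ := sel1 hsc hq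
  obtain ⟨hpX, hp1, hp2, hparc, hpuniq⟩ := hξ p hp
  obtain ⟨htX, ht1, ht2, htarc, htuniq⟩ := hξ t ht
  have hnept : p ≠ t := fun h => no_loop hsc t (h ▸ hpt)
  have hξne : ξ t ≠ ξ p := fun h => hnept (hξinj t p ht hp h).symm
  obtain ⟨z0, hz0c, z1, hz1c, hz01⟩ := Finset.one_lt_card.mp (show 1 < Xᶜ.card by omega)
  have hzpick : ∃ z, z ∉ X ∧ z ≠ t := by
    by_cases h : z0 = t
    · exact ⟨z1, Finset.mem_compl.1 hz1c, fun hc => hz01 (h.trans hc.symm)⟩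
    · exact ⟨z0, Finset.mem_compl.1 hz0c, h⟩
  obtain ⟨z, hzY, hzt⟩ := hzpick
  apply master hsc hg (r1 := ξ p) (r2 := u1) (y1 := t) hpX hu1 hp1 ht
  -- M1
  · intro v hv hv1 hv2
    by_cases hvu2 : v = u2
    · exact Or.inr (dom t v ht hv (by rw [hvu2]; exact fun h => ht2 h.symm))
    · exact Or.inl ⟨u2, hu2, fun h => hp2 h.symm, fun h => n12 h.symm,
        domS u2 u1 ho2 v hv hvu2 hv2⟩
  -- M2
  · intro v hv hv1 hv2
    by_cases hvu2 : v = u2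
    · refine Or.inl ⟨z, hzY, hzt, dom z v hzY hv ?_⟩
      rw [hvu2]
      exact fun h => (hξ z hzY).2.2.1 h.symm
    · exact Or.inr (Or.inr (domS u1 u2 ho1 v hv hv2 hvu2))
  -- M3
  · intro y hy hyt
    by_cases hya : ξ y = ξ p
    · have : y = p := hξinj y p hy hp hya
      exact Or.inr (this ▸ hpt)
    · exact Or.inl ⟨ξ y, (hξ y hy).1, hya, (hξ y hy).2.1, (hξ y hy).2.2.2.1⟩
  -- M4
  · intro y hy hyt
    by_cases hfull : ∀ z', z' ∉ X → A y z' → z' = t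
    · have hyt' : A y t := by
        obtain ⟨u, hu, hA⟩ := (hg y).2
        have := hfull u hu hA
        exact this ▸ hA
      have : y = p := huniq y hy hyt' hfull
      exact Or.inr (Or.inl (this ▸ hparc))
    · push_neg at hfull
      obtain ⟨z', hz', hAz', hz't⟩ := hfull
      exact Or.inl ⟨z', hz', hz't, hAz'⟩
  -- M5a
  · exact Or.inl ⟨u2, hu2, fun h => hp2 h.symm, fun h => n12 h.symm,
      domS u2 u1 ho2 (ξ p) hpX hp2 hp1⟩
  -- M5b
  · exact Or.inr (domS u1 u2 ho1 (ξ p) hpX hp1 hp2)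
  -- M6a
  · exact Or.inl ⟨u2, hu2, fun h => hp2 h.symm, fun h => n12 h.symm, ho1.1⟩
  -- M6b
  · exact Or.inl ⟨z, hzY, hzt, dom z u1 hzY hu1 (fun h => (hξ z hzY).2.1 h.symm)⟩
  -- M7a
  · exact ⟨ξ t, htX, hξne, ht1, htarc⟩

theorem shape_path (hsc : IsSemicomplete A) {X : Finset V} (hg : Good A X)
    {u1 u2 ww : V} {ξ : V → V}
    (hu1 : u1 ∈ X) (hu2 : u2 ∈ X) (hww : ww ∈ X)
    (n12 : u1 ≠ u2) (n1w : u1 ≠ ww) (n2w : u2 ≠ ww)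
    (ho1 : A u1 u2 ∧ ∀ u ∈ X, A u1 u → u = u2)
    (ho2 : A u2 ww ∧ ∀ u ∈ X, A u2 u → u = ww)
    (hq : 3 ≤ Xᶜ.card)
    (hξ : ∀ y, y ∉ X → ξ y ∈ X ∧ ξ y ≠ u2 ∧ ξ y ≠ ww ∧ A y (ξ y) ∧
            ∀ u ∈ X, A y u → u = ξ y)
    (hξinj : ∀ y y', y ∉ X → y' ∉ X → ξ y = ξ y' → y = y')
    {g : V} (hgY : g ∉ X) (hgξ : ξ g = u1) :
    ∃ X', Good A X' ∧ X'.card + 1 = X.card := by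
  have dom : ∀ y v, y ∉ X → v ∈ X → v ≠ ξ y → A v y := by
    intro y v hy hv hne
    refine arc_of_not hsc (fun h => hy (h ▸ hv)) ?_
    intro hA
    exact hne ((hξ y hy).2.2.2.2 v hv hA)
  have domS : ∀ s tn, (A s tn ∧ ∀ u ∈ X, A s u → u = tn) →
      ∀ v ∈ X, v ≠ s → v ≠ tn → A v s := by
    intro s tn hsout v hv hv1 hv2
    refine arc_of_not hsc hv1 ?_
    intro hA
    exact hv2 (hsout.2 v hv hA)
  -- a vertex outside X other than two given ones
  have zpick : ∀ b1 b2 : V, ∃ z, z ∉ X ∧ z ≠ b1 ∧ z ≠ b2 := by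
    intro b1 b2
    have hc : 0 < ((Xᶜ.erase b1).erase b2).card := by
      have h1 : Xᶜ.card - 2 ≤ ((Xᶜ.erase b1).erase b2).card := by
        have e1 : Xᶜ.card - 1 ≤ (Xᶜ.erase b1).card := Finset.pred_card_le_card_erase
        have e2 : (Xᶜ.erase b1).card - 1 ≤ ((Xᶜ.erase b1).erase b2).card :=
          Finset.pred_card_le_card_erase
        omega
      omega
    obtain ⟨z, hz⟩ := Finset.card_pos.mp hc
    have h2 := Finset.mem_erase.1 hz
    have h3 := Finset.mem_erase.1 h2.2
    exact ⟨z, Finset.mem_compl.1 h3.2, h3.1, h2.1⟩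
  -- Template 2 : remove ξ p and u2, promote t
  have T2 : ∀ p t : V, p ∉ X → t ∉ X → A p t → p ≠ g → t ≠ g →
      (∀ z, z ∉ X → A z t → (∀ z', z' ∉ X → A z z' → z' = t) → z = p) →
      ∃ X', Good A X' ∧ X'.card + 1 = X.card := by
    intro p t hp ht hpt hpg htg huniq
    obtain ⟨hpX, hp2, hpw, hparc, hpuniq⟩ := hξ p hp
    obtain ⟨htX, ht2, htw, htarc, htuniq⟩ := hξ t ht
    have hnept : p ≠ t := fun h => no_loop hsc t (h ▸ hpt)
    have hξne : ξ t ≠ ξ p := fun h => hnept (hξinj t p ht hp h).symm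
    have hau1 : ξ p ≠ u1 := fun h => hpg (hξinj p g hp hgY (h.trans hgξ.symm))
    have htu1 : ξ t ≠ u1 := fun h => htg (hξinj t g ht hgY (h.trans hgξ.symm))
    obtain ⟨z, hzY, hzt, hzg⟩ := zpick t g
    apply master hsc hg (r1 := ξ p) (r2 := u2) (y1 := t) hpX hu2 hp2 ht
    · intro v hv hv1 hv2
      by_cases hvu1 : v = u1
      · exact Or.inr (dom t v ht hv (by rw [hvu1]; exact fun h => htu1 h.symm))
      · exact Or.inl ⟨u1, hu1, fun h => hau1 h.symm, n12,
          domS u1 u2 ho1 v hv hvu1 hv2⟩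
    · intro v hv hv1 hv2
      by_cases hvww : v = ww
      · refine Or.inl ⟨z, hzY, hzt, dom z v hzY hv ?_⟩
        rw [hvww]
        exact fun h => (hξ z hzY).2.2.1 h.symm
      · exact Or.inr (Or.inr (domS u2 ww ho2 v hv hv2 hvww))
    · intro y hy hyt
      by_cases hya : ξ y = ξ p
      · have : y = p := hξinj y p hy hp hya
        exact Or.inr (this ▸ hpt)
      · exact Or.inl ⟨ξ y, (hξ y hy).1, hya, (hξ y hy).2.1, (hξ y hy).2.2.2.1⟩
    · intro y hy hyt
      by_cases hfull : ∀ z', z' ∉ X → A y z' → z' = t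
      · have hyt' : A y t := by
          obtain ⟨u, hu, hA⟩ := (hg y).2
          exact (hfull u hu hA) ▸ hA
        have : y = p := huniq y hy hyt' hfull
        exact Or.inr (Or.inl (this ▸ hparc))
      · push_neg at hfull
        obtain ⟨z', hz', hAz', hz't⟩ := hfull
        exact Or.inl ⟨z', hz', hz't, hAz'⟩
    · exact Or.inl ⟨u1, hu1, fun h => hau1 h.symm, n12,
        domS u1 u2 ho1 (ξ p) hpX hau1 hp2⟩
    · exact Or.inr (domS u2 ww ho2 (ξ p) hpX hp2 hpw)
    · exact Or.inl ⟨ww, hww, fun h => hpw h.symm, fun h => n2w h.symm, ho2.1⟩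
    · exact Or.inl ⟨z, hzY, hzt, dom z u2 hzY hu2 (fun h => (hξ z hzY).2.1 h.symm)⟩
    · exact ⟨ξ t, htX, hξne, ht2, htarc⟩
  -- Template 1 : remove ξ p and u1, promote t
  have T1 : ∀ p t : V, p ∉ X → t ∉ X → A p t → A g t → p ≠ g → t ≠ g →
      (∀ z, z ∉ X → A z t → (∀ z', z' ∉ X → A z z' → z' = t) → (z = p ∨ z = g)) →
      ∃ X', Good A X' ∧ X'.card + 1 = X.card := by
    intro p t hp ht hpt hgt hpg htg huniq
    obtain ⟨hpX, hp2, hpw, hparc, hpuniq⟩ := hξ p hp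
    obtain ⟨htX, ht2, htw, htarc, htuniq⟩ := hξ t ht
    have hnept : p ≠ t := fun h => no_loop hsc t (h ▸ hpt)
    have hξne : ξ t ≠ ξ p := fun h => hnept (hξinj t p ht hp h).symm
    have hau1 : ξ p ≠ u1 := fun h => hpg (hξinj p g hp hgY (h.trans hgξ.symm))
    have htu1 : ξ t ≠ u1 := fun h => htg (hξinj t g ht hgY (h.trans hgξ.symm))
    obtain ⟨z, hzY, hzt, hzg⟩ := zpick t g
    apply master hsc hg (r1 := ξ p) (r2 := u1) (y1 := t) hpX hu1 hau1 ht
    · intro v hv hv1 hv2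
      by_cases hvu2 : v = u2
      · exact Or.inl ⟨ww, hww, fun h => hpw h.symm, fun h => n1w h.symm,
          hvu2 ▸ ho2.1⟩
      by_cases hvww : v = ww
      · exact Or.inr (dom t v ht hv (by rw [hvww]; exact fun h => htw h.symm))
      · exact Or.inl ⟨u2, hu2, fun h => hp2 h.symm, fun h => n12 h.symm,
          domS u2 ww ho2 v hv hvu2 hvww⟩
    · intro v hv hv1 hv2
      by_cases hvu2 : v = u2
      · refine Or.inl ⟨z, hzY, hzt, dom z v hzY hv ?_⟩
        rw [hvu2]
        exact fun h => (hξ z hzY).2.1 h.symm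
      · exact Or.inr (Or.inr (domS u1 u2 ho1 v hv hv2 hvu2))
    · intro y hy hyt
      by_cases hya : ξ y = ξ p
      · have : y = p := hξinj y p hy hp hya
        exact Or.inr (this ▸ hpt)
      by_cases hyu1 : ξ y = u1
      · have : y = g := hξinj y g hy hgY (hyu1.trans hgξ.symm)
        exact Or.inr (this ▸ hgt)
      · exact Or.inl ⟨ξ y, (hξ y hy).1, hya, hyu1, (hξ y hy).2.2.2.1⟩
    · intro y hy hyt
      by_cases hfull : ∀ z', z' ∉ X → A y z' → z' = t
      · have hyt' : A y t := by
          obtain ⟨u, hu, hA⟩ := (hg y).2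
          exact (hfull u hu hA) ▸ hA
        rcases huniq y hy hyt' hfull with h | h
        · exact Or.inr (Or.inl (h ▸ hparc))
        · have hgu1 : A g u1 := by
            have := (hξ g hgY).2.2.2.1
            rwa [hgξ] at this
          exact Or.inr (Or.inr (h ▸ hgu1))
      · push_neg at hfull
        obtain ⟨z', hz', hAz', hz't⟩ := hfull
        exact Or.inl ⟨z', hz', hz't, hAz'⟩
    · exact Or.inl ⟨u2, hu2, fun h => hp2 h.symm, fun h => n12 h.symm,
        domS u2 ww ho2 (ξ p) hpX hp2 hpw⟩
    · exact Or.inr (domS u1 u2 ho1 (ξ p) hpX hau1 hp2)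
    · exact Or.inl ⟨u2, hu2, fun h => hp2 h.symm, fun h => n12 h.symm, ho1.1⟩
    · refine Or.inl ⟨z, hzY, hzt, dom z u1 hzY hu1 ?_⟩
      intro h
      exact hzg (hξinj z g hzY hgY (by rw [← h, hgξ]))
    · exact ⟨ξ t, htX, hξne, htu1, htarc⟩
  -- selection : an arc p → t outside X avoiding g
  obtain ⟨p0, t0, hp0, ht0, hp0g, ht0g, harc⟩ :
      ∃ p t : V, p ∉ X ∧ t ∉ X ∧ p ≠ g ∧ t ≠ g ∧ A p t := by
    have hc : 1 < (Xᶜ.erase g).card := by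
      have e1 : Xᶜ.card - 1 ≤ (Xᶜ.erase g).card := Finset.pred_card_le_card_erase
      omega
    obtain ⟨a, ha, b, hb, hab⟩ := Finset.one_lt_card.mp hc
    have ha' := Finset.mem_erase.1 ha
    have hb' := Finset.mem_erase.1 hb
    rcases arc_or hsc hab with h | h
    · exact ⟨a, b, Finset.mem_compl.1 ha'.2, Finset.mem_compl.1 hb'.2, ha'.1, hb'.1, h⟩
    · exact ⟨b, a, Finset.mem_compl.1 hb'.2, Finset.mem_compl.1 ha'.2, hb'.1, ha'.1, h⟩
  by_cases hz0 : ∃ z0, z0 ∉ X ∧ A z0 t0 ∧ ∀ z', z' ∉ X → A z0 z' → z' = t0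
  · obtain ⟨z0, hz0Y, hz0t, hz0u⟩ := hz0
    by_cases hz0g : z0 = g
    · -- g P-pairs t0 : use template 1 with p0
      refine T1 p0 t0 hp0 ht0 harc (hz0g ▸ hz0t) hp0g ht0g ?_
      intro z hz hzt hzu
      by_cases hzz : z = z0
      · exact Or.inr (hzz.trans hz0g)
      · exact absurd (ppair_unique hsc hz hz0Y ht0 hzt hzu hz0t hz0u hzz) not_false
    · -- z0 ≠ g : use template 2 with z0
      have hz0t0 : z0 ≠ t0 := fun h => no_loop hsc t0 (h ▸ hz0t)
      refine T2 z0 t0 hz0Y ht0 hz0t hz0g ht0g ?_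
      intro z hz hzt hzu
      by_cases hzz : z = z0
      · exact hzz
      · exact absurd (ppair_unique hsc hz hz0Y ht0 hzt hzu hz0t hz0u hzz) not_false
  · -- nobody P-pairs t0 : use template 2 with p0
    refine T2 p0 t0 hp0 ht0 harc hp0g ht0g ?_
    intro z hz hzt hzu
    exact absurd ⟨z, hz, hzt, hzu⟩ hz0

theorem shape_slack (hsc : IsSemicomplete A) {X : Finset V} (hg : Good A X)
    {s1 s2 s3 ystar : V} {ξ : V → V}
    (hs1 : s1 ∈ X) (hs2 : s2 ∈ X) (hs3 : s3 ∈ X)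
    (n12 : s1 ≠ s2) (n13 : s1 ≠ s3) (n23 : s2 ≠ s3)
    (ho1 : A s1 s2 ∧ ∀ u ∈ X, A s1 u → u = s2)
    (ho2 : A s2 s3 ∧ ∀ u ∈ X, A s2 u → u = s3)
    (ho3 : A s3 s1 ∧ ∀ u ∈ X, A s3 u → u = s1)
    (hys : ystar ∉ X)
    (hq : 3 ≤ Xᶜ.card)
    (hξ : ∀ y, y ∉ X → y ≠ ystar → ξ y ∈ X ∧ ξ y ≠ s1 ∧ ξ y ≠ s2 ∧ ξ y ≠ s3 ∧
            A y (ξ y) ∧ ∀ u ∈ X, A y u → u = ξ y)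
    (hξinj : ∀ y y', y ∉ X → y ≠ ystar → y' ∉ X → y' ≠ ystar → ξ y = ξ y' → y = y')
    (hξsurj : ∀ x ∈ X, x ≠ s1 → x ≠ s2 → x ≠ s3 → ∃ y, y ∉ X ∧ y ≠ ystar ∧ ξ y = x) :
    ∃ X', Good A X' ∧ X'.card + 1 = X.card := by
  have dom : ∀ y v, y ∉ X → y ≠ ystar → v ∈ X → v ≠ ξ y → A v y := by
    intro y v hy hyst hv hne
    refine arc_of_not hsc (fun h => hy (h ▸ hv)) ?_
    intro hA
    exact hne ((hξ y hy hyst).2.2.2.2.2 v hv hA)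
  have domS : ∀ s tn, (A s tn ∧ ∀ u ∈ X, A s u → u = tn) →
      ∀ v ∈ X, v ≠ s → v ≠ tn → A v s := by
    intro s tn hsout v hv hv1 hv2
    refine arc_of_not hsc hv1 ?_
    intro hA
    exact hv2 (hsout.2 v hv hA)
  -- a vertex of Yb different from a given vertex
  have ybpick : ∀ b : V, ∃ z, z ∉ X ∧ z ≠ ystar ∧ z ≠ b := by
    intro b
    have hc : 0 < ((Xᶜ.erase ystar).erase b).card := by
      have e1 : Xᶜ.card - 1 ≤ (Xᶜ.erase ystar).card := Finset.pred_card_le_card_erase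
      have e2 : (Xᶜ.erase ystar).card - 1 ≤ ((Xᶜ.erase ystar).erase b).card :=
        Finset.pred_card_le_card_erase
      omega
    obtain ⟨z, hz⟩ := Finset.card_pos.mp hc
    have h2 := Finset.mem_erase.1 hz
    have h3 := Finset.mem_erase.1 h2.2
    exact ⟨z, Finset.mem_compl.1 h3.2, h3.1, h2.1⟩
  -- Template OLD : remove ξ p and c1, promote t  (cycle c1 → c2 → c3 → c1)
  have TOLD : ∀ c1 c2 c3 : V, c1 ∈ X → c2 ∈ X → c3 ∈ X →
      c1 ≠ c2 → c2 ≠ c3 → c3 ≠ c1 →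
      (A c1 c2 ∧ ∀ u ∈ X, A c1 u → u = c2) →
      (A c2 c3 ∧ ∀ u ∈ X, A c2 u → u = c3) →
      (A c3 c1 ∧ ∀ u ∈ X, A c3 u → u = c1) →
      (∀ y (hy : y ∉ X) (hyst : y ≠ ystar), ξ y ≠ c1 ∧ ξ y ≠ c2 ∧ ξ y ≠ c3) →
      ∀ p t : V, p ∉ X → p ≠ ystar → t ∉ X → t ≠ ystar → A p t →
      (∀ z, z ∉ X → A z t → (∀ z', z' ∉ X → A z z' → z' = t) →
        z = p ∨ (z = ystar ∧ (A ystar (ξ p) ∨ A ystar c1))) →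
      ((∀ x ∈ X, A ystar x → x = ξ p ∨ x = c1) → A ystar t) →
      ∃ X', Good A X' ∧ X'.card + 1 = X.card := by
    intro c1 c2 c3 hc1 hc2 hc3 m12 m23 m31 go1 go2 go3 gS p t hp hpst ht htst hpt hPP hst
    obtain ⟨hpX, _, _, _, hparc, hpuniq⟩ := hξ p hp hpst
    obtain ⟨htX, _, _, _, htarc, htuniq⟩ := hξ t ht htst
    obtain ⟨gp1, gp2, gp3⟩ := gS p hp hpst
    obtain ⟨gt1, gt2, gt3⟩ := gS t ht htst
    have hnept : p ≠ t := fun h => no_loop hsc t (h ▸ hpt)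
    have hξne : ξ t ≠ ξ p := fun h => hnept (hξinj t p ht htst hp hpst h).symm
    obtain ⟨z, hzY, hzst, hzt⟩ := ybpick t
    apply master hsc hg (r1 := ξ p) (r2 := c1) (y1 := t) hpX hc1 gp1 ht
    · intro v hv hv1 hv2
      by_cases hv3 : v = c3
      · exact Or.inr (dom t v ht htst hv (by rw [hv3]; exact fun h => gt3 h.symm))
      by_cases hvc2 : v = c2
      · exact Or.inl ⟨c3, hc3, fun h => gp3 h.symm, fun h => m31 h, hvc2 ▸ go2.1⟩
      · exact Or.inl ⟨c2, hc2, fun h => gp2 h.symm, fun h => m12 h.symm,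
          domS c2 c3 go2 v hv hvc2 hv3⟩
    · intro v hv hv1 hv2
      by_cases hvc2 : v = c2
      · refine Or.inl ⟨z, hzY, hzt, dom z v hzY hzst hv ?_⟩
        rw [hvc2]
        exact fun h => (gS z hzY hzst).2.1 h.symm
      · exact Or.inr (Or.inr (domS c1 c2 go1 v hv hv2 hvc2))
    · intro y hy hyt
      by_cases hyst : y = ystar
      · by_cases hOs : ∃ u ∈ X, A ystar u ∧ u ≠ ξ p ∧ u ≠ c1
        · obtain ⟨u, hu, hAu, hu1, hu2⟩ := hOs
          exact Or.inl ⟨u, hu, hu1, hu2, hyst ▸ hAu⟩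
        · push_neg at hOs
          have : A ystar t := hst (fun x hx hAx => by
            rcases eq_or_ne x (ξ p) with h | h
            · exact Or.inl h
            · exact Or.inr (hOs x hx hAx h))
          exact Or.inr (hyst ▸ this)
      by_cases hya : ξ y = ξ p
      · have : y = p := hξinj y p hy hyst hp hpst hya
        exact Or.inr (this ▸ hpt)
      · exact Or.inl ⟨ξ y, (hξ y hy hyst).1, hya, (gS y hy hyst).1,
          (hξ y hy hyst).2.2.2.2.1⟩
    · intro y hy hyt
      by_cases hfull : ∀ z', z' ∉ X → A y z' → z' = t
      · have hyt' : A y t := by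
          obtain ⟨u, hu, hA⟩ := (hg y).2
          exact (hfull u hu hA) ▸ hA
        rcases hPP y hy hyt' hfull with h | ⟨h, harc⟩
        · exact Or.inr (Or.inl (h ▸ hparc))
        · rcases harc with h2 | h2
          · exact Or.inr (Or.inl (h ▸ h2))
          · exact Or.inr (Or.inr (h ▸ h2))
      · push_neg at hfull
        obtain ⟨z', hz', hAz', hz't⟩ := hfull
        exact Or.inl ⟨z', hz', hz't, hAz'⟩
    · exact Or.inl ⟨c2, hc2, fun h => gp2 h.symm, fun h => m12 h.symm,
        domS c2 c3 go2 (ξ p) hpX gp2 gp3⟩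
    · exact Or.inr (domS c1 c2 go1 (ξ p) hpX gp1 gp2)
    · exact Or.inl ⟨c2, hc2, fun h => gp2 h.symm, fun h => m12 h.symm, go1.1⟩
    · exact Or.inl ⟨z, hzY, hzt, dom z c1 hzY hzst hc1
        (fun h => (gS z hzY hzst).1 h.symm)⟩
    · exact ⟨ξ t, htX, hξne, gt1, htarc⟩
  -- Template PROMOTE : remove ξ tt and s1, promote ystar
  have TPRO : ∀ tt : V, tt ∉ X → tt ≠ ystar → A tt ystar →
      (∀ z, z ∉ X → A z ystar → (∀ z', z' ∉ X → A z z' → z' = ystar) → z = tt) →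
      (∃ x ∈ X, A ystar x ∧ x ≠ ξ tt ∧ x ≠ s1 ∧ x ≠ s2 ∧ x ≠ s3) →
      A s3 ystar →
      ∃ X', Good A X' ∧ X'.card + 1 = X.card := by
    intro tt htt httst harc hPP hwit hc3star
    obtain ⟨htX, gt1, gt2, gt3, htarc2, htuniq⟩ := hξ tt htt httst
    obtain ⟨xw, hxwX, hxwA, hxw0, hxw1, hxw2, hxw3⟩ := hwit
    obtain ⟨z, hzY, hzst, hztt⟩ := ybpick tt
    apply master hsc hg (r1 := ξ tt) (r2 := s1) (y1 := ystar) htX hs1 gt1 hys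
    · intro v hv hv1 hv2
      by_cases hv3 : v = s3
      · exact Or.inr (hv3 ▸ hc3star)
      by_cases hvs2 : v = s2
      · exact Or.inl ⟨s3, hs3, fun h => gt3 h.symm, fun h => n13 h.symm, hvs2 ▸ ho2.1⟩
      · exact Or.inl ⟨s2, hs2, fun h => gt2 h.symm, fun h => n12 h.symm,
          domS s2 s3 ho2 v hv hvs2 hv3⟩
    · intro v hv hv1 hv2
      by_cases hvs2 : v = s2
      · refine Or.inl ⟨z, hzY, hzst, dom z v hzY hzst hv ?_⟩
        rw [hvs2]
        exact fun h => (hξ z hzY hzst).2.2.1 h.symm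
      · exact Or.inr (Or.inr (domS s1 s2 ho1 v hv hv2 hvs2))
    · intro y hy hyst
      by_cases hya : ξ y = ξ tt
      · have : y = tt := hξinj y tt hy hyst htt httst hya
        exact Or.inr (this ▸ harc)
      · exact Or.inl ⟨ξ y, (hξ y hy hyst).1, hya, (hξ y hy hyst).2.1,
          (hξ y hy hyst).2.2.2.2.1⟩
    · intro y hy hyst
      by_cases hfull : ∀ z', z' ∉ X → A y z' → z' = ystar
      · have hyt' : A y ystar := by
          obtain ⟨u, hu, hA⟩ := (hg y).2
          exact (hfull u hu hA) ▸ hA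
        have : y = tt := hPP y hy hyt' hfull
        exact Or.inr (Or.inl (this ▸ htarc2))
      · push_neg at hfull
        obtain ⟨z', hz', hAz', hz't⟩ := hfull
        exact Or.inl ⟨z', hz', hz't, hAz'⟩
    · exact Or.inl ⟨s2, hs2, fun h => gt2 h.symm, fun h => n12 h.symm,
        domS s2 s3 ho2 (ξ tt) htX gt2 gt3⟩
    · exact Or.inr (domS s1 s2 ho1 (ξ tt) htX gt1 gt2)
    · exact Or.inl ⟨s2, hs2, fun h => gt2 h.symm, fun h => n12 h.symm, ho1.1⟩
    · exact Or.inl ⟨z, hzY, hzst, dom z s1 hzY hzst hs1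
        (fun h => (hξ z hzY hzst).2.1 h.symm)⟩
    · exact ⟨xw, hxwX, hxw0, hxw1, hxwA⟩
  -- Template NEW : remove s2 and s3, promote y1 from Yb
  have TNEW : ∀ y1 : V, y1 ∉ X → y1 ≠ ystar →
      (∀ z, z ∉ X → z ≠ y1 → A z y1 → (∀ z', z' ∉ X → A z z' → z' = y1) → False) →
      (∃ x ∈ X, A ystar x ∧ x ≠ s2 ∧ x ≠ s3) →
      ∃ X', Good A X' ∧ X'.card + 1 = X.card := by
    intro y1 hy1 hy1st hPP hwit
    obtain ⟨hy1X, g1, g2, g3, hy1arc, hy1uniq⟩ := hξ y1 hy1 hy1st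
    obtain ⟨xw, hxwX, hxwA, hxw2, hxw3⟩ := hwit
    obtain ⟨z, hzY, hzst, hzy1⟩ := ybpick y1
    apply master hsc hg (r1 := s2) (r2 := s3) (y1 := y1) hs2 hs3 n23 hy1
    · intro v hv hv2 hv3
      by_cases hv1 : v = s1
      · exact Or.inr (dom y1 v hy1 hy1st hv (by rw [hv1]; exact fun h => g1 h.symm))
      · exact Or.inl ⟨s1, hs1, n12, n13, domS s1 s2 ho1 v hv hv1 hv2⟩
    · intro v hv hv2 hv3
      exact Or.inr (Or.inl (domS s2 s3 ho2 v hv hv2 hv3))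
    · intro y hy hyy1
      by_cases hyst : y = ystar
      · exact Or.inl ⟨xw, hxwX, hxw2, hxw3, hyst ▸ hxwA⟩
      · exact Or.inl ⟨ξ y, (hξ y hy hyst).1, (hξ y hy hyst).2.2.1,
          (hξ y hy hyst).2.2.2.1, (hξ y hy hyst).2.2.2.2.1⟩
    · intro y hy hyy1
      by_cases hfull : ∀ z', z' ∉ X → A y z' → z' = y1
      · have hyt' : A y y1 := by
          obtain ⟨u, hu, hA⟩ := (hg y).2
          exact (hfull u hu hA) ▸ hA
        exact absurd (hPP y hy hyy1 hyt' hfull) not_false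
      · push_neg at hfull
        obtain ⟨z', hz', hAz', hz't⟩ := hfull
        exact Or.inl ⟨z', hz', hz't, hAz'⟩
    · exact Or.inr (dom y1 s2 hy1 hy1st hs2 (fun h => g2 h.symm))
    · exact Or.inl ⟨z, hzY, hzy1, dom z s2 hzY hzst hs2
        (fun h => (hξ z hzY hzst).2.2.1 h.symm)⟩
    · exact Or.inl ⟨s1, hs1, n12, n13, ho3.1⟩
    · exact Or.inl ⟨z, hzY, hzy1, dom z s3 hzY hzst hs3
        (fun h => (hξ z hzY hzst).2.2.2.1 h.symm)⟩
    · exact ⟨ξ y1, hy1X, g2, g3, hy1arc⟩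
  -- the designated X-out-neighbour of ystar
  obtain ⟨x0, hx0X, hx0A⟩ := (hg ystar).1
  -- rotations of the 3-cycle
  have gS123 : ∀ y (hy : y ∉ X) (hyst : y ≠ ystar), ξ y ≠ s1 ∧ ξ y ≠ s2 ∧ ξ y ≠ s3 :=
    fun y hy hyst => ⟨(hξ y hy hyst).2.1, (hξ y hy hyst).2.2.1, (hξ y hy hyst).2.2.2.1⟩
  have gS231 : ∀ y (hy : y ∉ X) (hyst : y ≠ ystar), ξ y ≠ s2 ∧ ξ y ≠ s3 ∧ ξ y ≠ s1 :=
    fun y hy hyst => ⟨(hξ y hy hyst).2.2.1, (hξ y hy hyst).2.2.2.1, (hξ y hy hyst).2.1⟩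
  have gS312 : ∀ y (hy : y ∉ X) (hyst : y ≠ ystar), ξ y ≠ s3 ∧ ξ y ≠ s1 ∧ ξ y ≠ s2 :=
    fun y hy hyst => ⟨(hξ y hy hyst).2.2.2.1, (hξ y hy hyst).2.1, (hξ y hy hyst).2.2.1⟩
  -- rotation avoiding a given vertex as c1
  have rotpick : ∀ x : V, ∃ c1 c2 c3 : V, x ≠ c1 ∧ c1 ∈ X ∧ c2 ∈ X ∧ c3 ∈ X ∧
      c1 ≠ c2 ∧ c2 ≠ c3 ∧ c3 ≠ c1 ∧
      (A c1 c2 ∧ ∀ u ∈ X, A c1 u → u = c2) ∧ (A c2 c3 ∧ ∀ u ∈ X, A c2 u → u = c3) ∧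
      (A c3 c1 ∧ ∀ u ∈ X, A c3 u → u = c1) ∧
      (∀ y (hy : y ∉ X) (hyst : y ≠ ystar), ξ y ≠ c1 ∧ ξ y ≠ c2 ∧ ξ y ≠ c3) := by
    intro x
    by_cases h : x = s1
    · exact ⟨s2, s3, s1, fun hc => n12 (by rw [← h, hc]), hs2, hs3, hs1,
        n23, fun hh => n13 hh.symm, n12, ho2, ho3, ho1, gS231⟩
    · exact ⟨s1, s2, s3, h, hs1, hs2, hs3, n12, n23, fun hh => n13 hh.symm,
        ho1, ho2, ho3, gS123⟩
  -- rotation starting at a given element of the cycle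
  have rotat : ∀ x : V, (x = s1 ∨ x = s2 ∨ x = s3) → ∃ c1 c2 c3 : V, c1 = x ∧
      c1 ∈ X ∧ c2 ∈ X ∧ c3 ∈ X ∧ c1 ≠ c2 ∧ c2 ≠ c3 ∧ c3 ≠ c1 ∧
      (A c1 c2 ∧ ∀ u ∈ X, A c1 u → u = c2) ∧ (A c2 c3 ∧ ∀ u ∈ X, A c2 u → u = c3) ∧
      (A c3 c1 ∧ ∀ u ∈ X, A c3 u → u = c1) ∧
      (∀ y (hy : y ∉ X) (hyst : y ≠ ystar), ξ y ≠ c1 ∧ ξ y ≠ c2 ∧ ξ y ≠ c3) := by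
    rintro x (h | h | h)
    · exact ⟨s1, s2, s3, h.symm, hs1, hs2, hs3, n12, n23, fun hh => n13 hh.symm,
        ho1, ho2, ho3, gS123⟩
    · exact ⟨s2, s3, s1, h.symm, hs2, hs3, hs1, n23, fun hh => n13 hh.symm, n12,
        ho2, ho3, ho1, gS231⟩
    · exact ⟨s3, s1, s2, h.symm, hs3, hs1, hs2, fun hh => n13 hh.symm, n12, n23,
        ho3, ho1, ho2, gS312⟩
  by_cases h4I : ∃ p t, p ∉ X ∧ p ≠ ystar ∧ t ∉ X ∧ t ≠ ystar ∧ A p t ∧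
      ∀ z', z' ∉ X → A p z' → z' = t
  · -- 4-I : a P-pair inside Yb
    obtain ⟨p, t, hp, hpst, ht, htst, hpt, hpu⟩ := h4I
    have hpX := (hξ p hp hpst).1
    have hparc := (hξ p hp hpst).2.2.2.2.1
    have hPPgen : ∀ z, z ∉ X → A z t → (∀ z', z' ∉ X → A z z' → z' = t) → z = p := by
      intro z hz hzt hzu
      by_contra hne
      exact ppair_unique hsc hz hp ht hzt hzu hpt hpu hne
    by_cases hOs : ∃ x ∈ X, A ystar x ∧ x ≠ ξ p
    · obtain ⟨x, hxX, hxA, hxne⟩ := hOs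
      obtain ⟨c1, c2, c3, hxc1, hc1, hc2, hc3, m12, m23, m31, go1, go2, go3, gS⟩ :=
        rotpick x
      refine TOLD c1 c2 c3 hc1 hc2 hc3 m12 m23 m31 go1 go2 go3 gS p t hp hpst ht htst hpt
        (fun z hz hzt hzu => Or.inl (hPPgen z hz hzt hzu)) ?_
      intro hsub
      rcases hsub x hxX hxA with e | e
      · exact absurd e hxne
      · exact absurd e hxc1
    · push_neg at hOs
      by_cases hAyt : A ystar t
      · exact TOLD s1 s2 s3 hs1 hs2 hs3 n12 n23 (fun hh => n13 hh.symm)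
          ho1 ho2 ho3 gS123 p t hp hpst ht htst hpt
          (fun z hz hzt hzu => Or.inl (hPPgen z hz hzt hzu)) (fun _ => hAyt)
      · have hty : A t ystar := arc_of_not hsc htst hAyt
        have hx0p : x0 = ξ p := hOs x0 hx0X hx0A
        have hAyξp : A ystar (ξ p) := by rwa [hx0p] at hx0A
        have hξpS : ξ p ≠ s1 ∧ ξ p ≠ s2 ∧ ξ p ≠ s3 := gS123 p hp hpst
        have hc3star : A s3 ystar := by
          refine arc_of_not hsc (fun h => hys (h ▸ hs3)) ?_
          intro hA
          exact hξpS.2.2 (hOs s3 hs3 hA).symm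
        by_cases hz2 : ∃ z2, z2 ∉ X ∧ z2 ≠ ystar ∧ z2 ≠ t ∧ A z2 ystar ∧
            ∀ z', z' ∉ X → A z2 z' → z' = ystar
        · obtain ⟨z2, hz2Y, hz2st, hz2t, hz2A, hz2u⟩ := hz2
          have hz2p : z2 ≠ p := fun h => htst (hpu ystar hys (h ▸ hz2A)).symm
          refine TPRO z2 hz2Y hz2st hz2A ?_ ?_ hc3star
          · intro z hz hzA hzu
            by_contra hne
            exact ppair_unique hsc hz hz2Y hys hzA hzu hz2A hz2u hne
          · refine ⟨ξ p, hpX, hAyξp, ?_, hξpS.1, hξpS.2.1, hξpS.2.2⟩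
            intro h
            exact hz2p (hξinj z2 p hz2Y hz2st hp hpst h.symm)
        · refine TPRO t ht htst hty ?_ ?_ hc3star
          · intro z hz hzA hzu
            have hzst : z ≠ ystar := fun h => no_loop hsc ystar (h ▸ hzA)
            by_contra hne
            exact hz2 ⟨z, hz, hzst, hne, hzA, hzu⟩
          · refine ⟨ξ p, hpX, hAyξp, ?_, hξpS.1, hξpS.2.1, hξpS.2.2⟩
            intro h
            have hnept : p ≠ t := fun hh => no_loop hsc t (hh ▸ hpt)
            exact hnept (hξinj p t hp hpst ht htst h)
  · -- 4-II : no P-pair inside Yb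
    push_neg at h4I
    by_cases hQ2 : ∃ w1 w2, w1 ∉ X ∧ w2 ∉ X ∧ w1 ≠ w2 ∧ A ystar w1 ∧ A ystar w2
    · -- ystar has two out-neighbours outside X
      obtain ⟨w1, w2, hw1, hw2, hww, hA1, hA2⟩ := hQ2
      have hystarNotPp : ∀ t', (∀ z', z' ∉ X → A ystar z' → z' = t') → False := by
        intro t' hu
        exact hww ((hu w1 hw1 hA1).trans (hu w2 hw2 hA2).symm)
      by_cases hβ : ∃ p t x, p ∉ X ∧ p ≠ ystar ∧ t ∉ X ∧ t ≠ ystar ∧ A p t ∧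
          x ∈ X ∧ A ystar x ∧ x ≠ ξ p
      · obtain ⟨p, t, x, hp, hpst, ht, htst, hpt, hxX, hxA, hxne⟩ := hβ
        obtain ⟨c1, c2, c3, hxc1, hc1, hc2, hc3, m12, m23, m31, go1, go2, go3, gS⟩ :=
          rotpick x
        refine TOLD c1 c2 c3 hc1 hc2 hc3 m12 m23 m31 go1 go2 go3 gS p t hp hpst ht htst hpt
          ?_ ?_
        · intro z hz hzt hzu
          by_cases hzst : z = ystar
          · exact absurd (hystarNotPp t (by rw [hzst] at hzu; exact hzu)) not_false
          · obtain ⟨z', hz', hAz', hz't⟩ := h4I z t hz hzst ht htst hzt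
            exact absurd (hzu z' hz' hAz') hz't
        · intro hsub
          rcases hsub x hxX hxA with e | e
          · exact absurd e hxne
          · exact absurd e hxc1
      · push_neg at hβ
        -- all arcs inside Yb start at p₁ := the ξ-preimage of Ostar = {x0}
        have hcc : 1 < (Xᶜ.erase ystar).card := by
          have := Finset.pred_card_le_card_erase (s := Xᶜ) (a := ystar)
          omega
        obtain ⟨a, ha, b, hb, hab⟩ := Finset.one_lt_card.mp hcc
        have ha' := Finset.mem_erase.1 ha
        have hb' := Finset.mem_erase.1 hb
        have haY : a ∉ X := Finset.mem_compl.1 ha'.2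
        have hbY : b ∉ X := Finset.mem_compl.1 hb'.2
        obtain ⟨p₁, t₁, hp₁, hp₁st, ht₁, ht₁st, hpt₁⟩ :
            ∃ p₁ t₁, p₁ ∉ X ∧ p₁ ≠ ystar ∧ t₁ ∉ X ∧ t₁ ≠ ystar ∧ A p₁ t₁ := by
          rcases arc_or hsc hab with h | h
          · exact ⟨a, b, haY, ha'.1, hbY, hb'.1, h⟩
          · exact ⟨b, a, hbY, hb'.1, haY, ha'.1, h⟩
        have ht₁p₁ : t₁ ≠ p₁ := fun h => no_loop hsc t₁ (by rw [h] at hpt₁; exact h ▸ hpt₁)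
        have hx0p : x0 = ξ p₁ := hβ p₁ t₁ x0 hp₁ hp₁st ht₁ ht₁st hpt₁ hx0X hx0A
        have honly : ∀ d, d ∉ X → d ≠ ystar → d ≠ p₁ → d = t₁ := by
          intro d hd hdst hdp
          by_contra hdt
          rcases arc_or hsc (show d ≠ t₁ from hdt) with h | h
          · have e : x0 = ξ d := hβ d t₁ x0 hd hdst ht₁ ht₁st h hx0X hx0A
            exact hdp (hξinj d p₁ hd hdst hp₁ hp₁st (by rw [← e, hx0p]))
          · have e : x0 = ξ t₁ := hβ t₁ d x0 ht₁ ht₁st hd hdst h hx0X hx0A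
            exact ht₁p₁ (hξinj t₁ p₁ ht₁ ht₁st hp₁ hp₁st (by rw [← e, hx0p]))
        have hnT : ¬ A t₁ p₁ := by
          intro h
          have e : x0 = ξ t₁ := hβ t₁ p₁ x0 ht₁ ht₁st hp₁ hp₁st h hx0X hx0A
          exact ht₁p₁ (hξinj t₁ p₁ ht₁ ht₁st hp₁ hp₁st (by rw [← e, hx0p]))
        have ht₁u : ∀ z', z' ∉ X → A t₁ z' → z' = ystar := by
          intro z' hz' hAz'
          by_contra hne
          have hz't : z' ≠ t₁ := fun h => no_loop hsc t₁ (h ▸ hAz')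
          rcases eq_or_ne z' p₁ with rfl | hzp
          · exact hnT hAz'
          · exact hz't (honly z' hz' hne hzp)
        have ht₁A : A t₁ ystar := by
          obtain ⟨u, hu, hA⟩ := (hg t₁).2
          exact (ht₁u u hu hA) ▸ hA
        have hξp₁S := gS123 p₁ hp₁ hp₁st
        refine TPRO t₁ ht₁ ht₁st ht₁A ?_ ?_ ?_
        · intro z hz hzA hzu
          have hzst : z ≠ ystar := fun h => no_loop hsc ystar (h ▸ hzA)
          by_cases hzp : z = p₁
          · exact absurd (hzu t₁ ht₁ (hzp ▸ hpt₁)) ht₁st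
          · exact honly z hz hzst hzp
        · refine ⟨x0, hx0X, hx0A, ?_, ?_, ?_, ?_⟩
          · intro h
            exact ht₁p₁ (hξinj t₁ p₁ ht₁ ht₁st hp₁ hp₁st (by rw [← h, hx0p]))
          · rw [hx0p]; exact hξp₁S.1
          · rw [hx0p]; exact hξp₁S.2.1
          · rw [hx0p]; exact hξp₁S.2.2
        · refine arc_of_not hsc (fun h => hys (h ▸ hs3)) ?_
          intro hA
          have e : s3 = ξ p₁ := hβ p₁ t₁ s3 hp₁ hp₁st ht₁ ht₁st hpt₁ hs3 hA
          exact hξp₁S.2.2 e.symm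
    · -- ystar has a unique out-neighbour τ outside X
      push_neg at hQ2
      obtain ⟨τ, hτY, hτA⟩ := (hg ystar).2
      have hτst : τ ≠ ystar := fun h => no_loop hsc ystar (h ▸ hτA)
      have hτuniq : ∀ w, w ∉ X → A ystar w → w = τ := by
        intro w hw hAw
        by_contra hne
        exact hQ2 w τ hw hτY hne hAw hτA
      by_cases hOsplit : ∃ x1 ∈ X, A ystar x1 ∧ x1 ≠ ξ τ
      · obtain ⟨x1, hx1X, hx1A, hx1ne⟩ := hOsplit
        by_cases hx1S : x1 = s1 ∨ x1 = s2 ∨ x1 = s3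
        · by_cases hin : ∃ p, p ∉ X ∧ p ≠ ystar ∧ p ≠ τ ∧ A p τ
          · obtain ⟨p, hp, hpst, hpτ, hpA⟩ := hin
            obtain ⟨c1, c2, c3, hc1x, hc1, hc2, hc3, m12, m23, m31, go1, go2, go3, gS⟩ :=
              rotat x1 hx1S
            refine TOLD c1 c2 c3 hc1 hc2 hc3 m12 m23 m31 go1 go2 go3 gS p τ hp hpst
              hτY hτst hpA ?_ (fun _ => hτA)
            intro z hz hzt hzu
            by_cases hzst : z = ystar
            · exact Or.inr ⟨hzst, Or.inr (by rw [hc1x]; exact hx1A)⟩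
            by_cases hzp : z = p
            · exact Or.inl hzp
            · obtain ⟨z', hz', hAz', hz't⟩ := h4I z τ hz hzst hτY hτst hzt
              exact absurd (hzu z' hz' hAz') hz't
          · obtain ⟨c, hcY, hcst, hcτ⟩ := ybpick τ
            have hτc : A τ c := by
              refine arc_of_not hsc (fun h => hcτ h.symm) ?_
              intro hA
              exact hin ⟨c, hcY, hcst, hcτ, hA⟩
            obtain ⟨c1, c2, c3, hxc1, hc1, hc2, hc3, m12, m23, m31, go1, go2, go3, gS⟩ :=
              rotpick x1
            refine TOLD c1 c2 c3 hc1 hc2 hc3 m12 m23 m31 go1 go2 go3 gS τ c hτY hτst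
              hcY hcst hτc ?_ ?_
            · intro z hz hzt hzu
              by_cases hzst : z = ystar
              · exfalso
                have : c = τ := hτuniq c hcY (by rw [← hzst]; exact hzt)
                exact hcτ this
              by_cases hzτ : z = τ
              · exact Or.inl hzτ
              · obtain ⟨z', hz', hAz', hz't⟩ := h4I z c hz hzst hcY hcst hzt
                exact absurd (hzu z' hz' hAz') hz't
            · intro hsub
              rcases hsub x1 hx1X hx1A with e | e
              · exact absurd e hx1ne
              · exact absurd e hxc1
        · push_neg at hx1S
          obtain ⟨p₀, hp₀Y, hp₀st, hp₀eq⟩ := hξsurj x1 hx1X hx1S.1 hx1S.2.1 hx1S.2.2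
          have hp₀τ : p₀ ≠ τ := fun h => hx1ne (by rw [← hp₀eq, h])
          have hAyξp₀ : A ystar (ξ p₀) := by rw [hp₀eq]; exact hx1A
          by_cases hpin : A p₀ τ
          · refine TOLD s1 s2 s3 hs1 hs2 hs3 n12 n23 (fun hh => n13 hh.symm)
              ho1 ho2 ho3 gS123 p₀ τ hp₀Y hp₀st hτY hτst hpin ?_ (fun _ => hτA)
            intro z hz hzt hzu
            by_cases hzst : z = ystar
            · exact Or.inr ⟨hzst, Or.inl hAyξp₀⟩
            by_cases hzp : z = p₀
            · exact Or.inl hzp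
            · obtain ⟨z', hz', hAz', hz't⟩ := h4I z τ hz hzst hτY hτst hzt
              exact absurd (hzu z' hz' hAz') hz't
          · have hτp₀ : A τ p₀ := arc_of_not hsc (fun h => hp₀τ h.symm) hpin
            refine TOLD s1 s2 s3 hs1 hs2 hs3 n12 n23 (fun hh => n13 hh.symm)
              ho1 ho2 ho3 gS123 τ p₀ hτY hτst hp₀Y hp₀st hτp₀ ?_ ?_
            · intro z hz hzt hzu
              by_cases hzst : z = ystar
              · exfalso
                have : p₀ = τ := hτuniq p₀ hp₀Y (by rw [← hzst]; exact hzt)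
                exact hp₀τ this
              by_cases hzτ : z = τ
              · exact Or.inl hzτ
              · obtain ⟨z', hz', hAz', hz't⟩ := h4I z p₀ hz hzst hp₀Y hp₀st hzt
                exact absurd (hzu z' hz' hAz') hz't
            · intro hsub
              rcases hsub x1 hx1X hx1A with e | e
              · exact absurd e hx1ne
              · exact absurd e hx1S.1
      · push_neg at hOsplit
        have hτYb := hξ τ hτY hτst
        obtain ⟨c, hcY, hcst, hcτ⟩ := ybpick τ
        refine TNEW c hcY hcst ?_ ?_
        · intro z hz hzc hzA hzu
          by_cases hzst : z = ystar
          · have : c = τ := hτuniq c hcY (by rw [← hzst]; exact hzA)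
            exact hcτ this
          · obtain ⟨z', hz', hAz', hz't⟩ := h4I z c hz hzst hcY hcst hzA
            exact absurd (hzu z' hz' hAz') hz't
        · have : A ystar (ξ τ) := by
            have e : x0 = ξ τ := hOsplit x0 hx0X hx0A
            rwa [e] at hx0A
          exact ⟨ξ τ, hτYb.1, this, hτYb.2.2.1, hτYb.2.2.2.1⟩


theorem improve (hsc : IsSemicomplete A) {X : Finset V}
    (hg : Good A X) (himb : Xᶜ.card + 2 ≤ X.card) (hn : 7 ≤ Fintype.card V) :
    ∃ X', Good A X' ∧ X'.card + 1 = X.card := by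
  classical
  by_cases hub : ∃ x ∈ X, ∀ v, ∃ u ∈ X, u ≠ x ∧ A v u
  · obtain ⟨x, hx, h⟩ := hub
    exact move1 hx hg h
  push_neg at hub
  have hblk : ∀ x ∈ X, ∃ v, A v x ∧ ∀ u ∈ X, A v u → u = x := by
    intro x hx
    obtain ⟨v, hv⟩ := hub x hx
    refine ⟨v, ?_, ?_⟩
    · obtain ⟨u, hu, hA⟩ := (hg v).1
      by_cases h : u = x
      · exact h ▸ hA
      · exact absurd hA (hv u hu h)
    · intro u hu hA
      by_contra h
      exact hv u hu h hA
  have hphi : ∀ x : V, ∃ v, x ∈ X →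
      (A v x ∧ (∀ u ∈ X, A v u → u = x) ∧
        ((∃ w ∈ X, A w x ∧ ∀ u ∈ X, A w u → u = x) → v ∈ X)) := by
    intro x
    by_cases hx : x ∈ X
    · by_cases h : ∃ w ∈ X, A w x ∧ ∀ u ∈ X, A w u → u = x
      · obtain ⟨w, hw, h1, h2⟩ := h
        exact ⟨w, fun _ => ⟨h1, h2, fun _ => hw⟩⟩
      · obtain ⟨v, h1, h2⟩ := hblk x hx
        exact ⟨v, fun _ => ⟨h1, h2, fun hc => absurd hc h⟩⟩
    · exact ⟨x, fun h => absurd h hx⟩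
  choose φ hφ using hphi
  have hφb : ∀ x ∈ X, A (φ x) x := fun x hx => ((hφ x) hx).1
  have hφu : ∀ x ∈ X, ∀ u ∈ X, A (φ x) u → u = x := fun x hx => ((hφ x) hx).2.1
  have hφp : ∀ x ∈ X, (∃ w ∈ X, A w x ∧ ∀ u ∈ X, A w u → u = x) → φ x ∈ X :=
    fun x hx => ((hφ x) hx).2.2
  have hφinj : ∀ x ∈ X, ∀ x' ∈ X, φ x = φ x' → x = x' := by
    intro x hx x' hx' h
    exact hφu x' hx' x hx (h ▸ hφb x hx)
  set XB : Finset V := X.filter (fun x => φ x ∈ X) with hXBdef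
  have hXBiff : ∀ x, x ∈ XB ↔ x ∈ X ∧ φ x ∈ X := by
    intro x
    rw [hXBdef, Finset.mem_filter]
  have hXBsub : XB ⊆ X := Finset.filter_subset _ _
  have hXBmem : ∀ v ∈ X, ∀ t ∈ X, A v t → (∀ u ∈ X, A v u → u = t) → t ∈ XB := by
    intro v hv t ht hA hU
    exact (hXBiff t).2 ⟨ht, hφp t ht ⟨v, hv, hA, hU⟩⟩
  set Yb : Finset V := (X \ XB).image φ with hYbdef
  have hYbY : ∀ y ∈ Yb, y ∉ X := by
    intro y hy
    rw [hYbdef, Finset.mem_image] at hy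
    obtain ⟨x, hx, rfl⟩ := hy
    rw [Finset.mem_sdiff] at hx
    intro hc
    exact hx.2 ((hXBiff x).2 ⟨hx.1, hc⟩)
  have hYbcard : Yb.card = X.card - XB.card := by
    rw [hYbdef, Finset.card_image_of_injOn, Finset.card_sdiff_of_subset hXBsub]
    intro x hx y hy h
    rw [Finset.mem_coe, Finset.mem_sdiff] at hx hy
    exact hφinj x hx.1 y hy.1 h
  have hYbsub : Yb ⊆ Xᶜ := fun y hy => Finset.mem_compl.2 (hYbY y hy)
  have hYbles : Yb.card ≤ Xᶜ.card := Finset.card_le_card hYbsub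
  have hXB2 : 2 ≤ XB.card := by
    have h2 : XB.card ≤ X.card := Finset.card_le_card hXBsub
    omega
  -- ξ : the designated unique out-neighbour in `X` of a vertex of `Yb`
  set ξ : V → V := fun y => if h : ∃ x, x ∈ X ∧ φ x ∉ X ∧ φ x = y then h.choose else y
    with hξdef
  have hξYb : ∀ y ∈ Yb, ξ y ∈ X ∧ φ (ξ y) ∉ X ∧ φ (ξ y) = y := by
    intro y hy
    rw [hYbdef, Finset.mem_image] at hy
    obtain ⟨x, hx, hxy⟩ := hy
    rw [Finset.mem_sdiff] at hx
    have hx2 : φ x ∉ X := fun hc => hx.2 ((hXBiff x).2 ⟨hx.1, hc⟩)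
    have hex : ∃ x', x' ∈ X ∧ φ x' ∉ X ∧ φ x' = y := ⟨x, hx.1, hx2, hxy⟩
    have : ξ y = hex.choose := by
      rw [hξdef]
      exact dif_pos hex
    rw [this]
    exact hex.choose_spec
  have hξarc : ∀ y ∈ Yb, A y (ξ y) := by
    intro y hy
    have h := hξYb y hy
    have := hφb (ξ y) h.1
    rwa [h.2.2] at this
  have hξuniq : ∀ y ∈ Yb, ∀ u ∈ X, A y u → u = ξ y := by
    intro y hy
    have h := hξYb y hy
    have := hφu (ξ y) h.1
    rwa [h.2.2] at this
  have hξinj : ∀ y ∈ Yb, ∀ y' ∈ Yb, ξ y = ξ y' → y = y' := by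
    intro y hy y' hy' h
    have h1 := hξYb y hy
    have h2 := hξYb y' hy'
    rw [← h1.2.2, ← h2.2.2, h]
  have hξXB : ∀ y ∈ Yb, ξ y ∉ XB := by
    intro y hy hc
    exact (hξYb y hy).2.1 ((hXBiff (ξ y)).1 hc).2
  have hξsurj : ∀ x ∈ X, x ∉ XB → φ x ∈ Yb ∧ ξ (φ x) = x := by
    intro x hx hxb
    have hmem : φ x ∈ Yb := by
      rw [hYbdef, Finset.mem_image]
      exact ⟨x, Finset.mem_sdiff.2 ⟨hx, hxb⟩, rfl⟩
    refine ⟨hmem, ?_⟩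
    have h := hξYb (φ x) hmem
    exact hφinj (ξ (φ x)) h.1 x hx h.2.2
  -- XB has at most 3 elements
  have hXB3 : XB.card ≤ 3 := by
    by_contra hc
    push_neg at hc
    obtain ⟨x1, hx1⟩ := Finset.card_pos.mp (show 0 < XB.card by omega)
    obtain ⟨x2, hx2⟩ := Finset.card_pos.mp
      (show 0 < (XB.erase x1).card by rw [Finset.card_erase_of_mem hx1]; omega)
    obtain ⟨x3, hx3⟩ := Finset.card_pos.mp
      (show 0 < ((XB.erase x1).erase x2).card by
        rw [Finset.card_erase_of_mem hx2, Finset.card_erase_of_mem hx1]; omega)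
    obtain ⟨x4, hx4⟩ := Finset.card_pos.mp
      (show 0 < (((XB.erase x1).erase x2).erase x3).card by
        rw [Finset.card_erase_of_mem hx3, Finset.card_erase_of_mem hx2,
          Finset.card_erase_of_mem hx1]; omega)
    have hx2' := Finset.mem_erase.1 hx2
    have hx3' := Finset.mem_erase.1 hx3
    have hx3'' := Finset.mem_erase.1 hx3'.2
    have hx4' := Finset.mem_erase.1 hx4
    have hx4'' := Finset.mem_erase.1 hx4'.2
    have hx4''' := Finset.mem_erase.1 hx4''.2
    have m1 : x1 ∈ X := hXBsub hx1
    have m2 : x2 ∈ X := hXBsub hx2'.2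
    have m3 : x3 ∈ X := hXBsub hx3''.2
    have m4 : x4 ∈ X := hXBsub hx4'''.2
    have f1 : φ x1 ∈ X := ((hXBiff x1).1 hx1).2
    have f2 : φ x2 ∈ X := ((hXBiff x2).1 hx2'.2).2
    have f3 : φ x3 ∈ X := ((hXBiff x3).1 hx3''.2).2
    have f4 : φ x4 ∈ X := ((hXBiff x4).1 hx4'''.2).2
    have dφ : ∀ a b, a ∈ X → b ∈ X → a ≠ b → φ a ≠ φ b :=
      fun a b ha hb hab h => hab (hφinj a ha b hb h)
    exact no_four hsc f1 f2 f3 f4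
      (dφ x1 x2 m1 m2 (fun h => hx2'.1 h.symm))
      (dφ x1 x3 m1 m3 (fun h => hx3''.1 h.symm))
      (dφ x1 x4 m1 m4 (fun h => hx4'''.1 h.symm))
      (dφ x2 x3 m2 m3 (fun h => hx3'.1 h.symm))
      (dφ x2 x4 m2 m4 (fun h => hx4''.1 h.symm))
      (dφ x3 x4 m3 m4 (fun h => hx4'.1 h.symm))
      ⟨hφb x1 m1, hφu x1 m1⟩ ⟨hφb x2 m2, hφu x2 m2⟩
      ⟨hφb x3 m3, hφu x3 m3⟩ ⟨hφb x4 m4, hφu x4 m4⟩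
  have hcardV : X.card + Xᶜ.card = Fintype.card V := Finset.card_add_card_compl X
  have hXB23 : XB.card = 2 ∨ XB.card = 3 := by omega
  rcases hXB23 with hk | hk
  · -- |XB| = 2 : digon or path
    obtain ⟨x1, hx1⟩ := Finset.card_pos.mp (show 0 < XB.card by omega)
    obtain ⟨x2, hx2⟩ := Finset.card_pos.mp
      (show 0 < (XB.erase x1).card by rw [Finset.card_erase_of_mem hx1]; omega)
    have hx2' := Finset.mem_erase.1 hx2
    have hd12 : x1 ≠ x2 := fun h => hx2'.1 h.symm
    have hXBeq : {x1, x2} = XB := by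
      apply Finset.eq_of_subset_of_card_le
      · intro z hz
        rcases Finset.mem_insert.1 hz with rfl | hz'
        · exact hx1
        · rw [Finset.mem_singleton] at hz'
          exact hz' ▸ hx2'.2
      · rw [Finset.card_insert_of_notMem (by simp [hd12]), Finset.card_singleton]
        omega
    have hXBc : ∀ x ∈ XB, x = x1 ∨ x = x2 := by
      intro x hx
      rw [← hXBeq, Finset.mem_insert, Finset.mem_singleton] at hx
      exact hx
    have m1 : x1 ∈ X := hXBsub hx1
    have m2 : x2 ∈ X := hXBsub hx2'.2
    have f1 : φ x1 ∈ X := ((hXBiff x1).1 hx1).2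
    have f2 : φ x2 ∈ X := ((hXBiff x2).1 hx2'.2).2
    have dw12 : φ x1 ≠ φ x2 := fun h => hd12 (hφinj x1 m1 x2 m2 h)
    obtain ⟨u1, u2, wv, hu1X, hu2X, hwvX, nu12, hu2XB, hwvXB, ho1, ho2, hXBc2⟩ :
        ∃ u1 u2 wv : V, u1 ∈ X ∧ u2 ∈ X ∧ wv ∈ X ∧ u1 ≠ u2 ∧ u2 ∈ XB ∧ wv ∈ XB ∧
          (A u1 u2 ∧ ∀ u ∈ X, A u1 u → u = u2) ∧
          (A u2 wv ∧ ∀ u ∈ X, A u2 u → u = wv) ∧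
          (∀ x ∈ XB, x = u2 ∨ x = wv) := by
      rcases arc_or hsc dw12 with h | h
      · have e : φ x2 = x1 := hφu x1 m1 (φ x2) f2 h
        refine ⟨φ x1, φ x2, x2, f1, f2, m2, dw12, e.symm ▸ hx1, hx2'.2,
          ⟨h, fun u hu hA => (hφu x1 m1 u hu hA).trans e.symm⟩,
          ⟨hφb x2 m2, hφu x2 m2⟩, ?_⟩
        intro x hx
        rcases hXBc x hx with rfl | rfl
        · exact Or.inl e.symm
        · exact Or.inr rfl
      · have e : φ x1 = x2 := hφu x2 m2 (φ x1) f1 h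
        refine ⟨φ x2, φ x1, x1, f2, f1, m1, dw12.symm, e.symm ▸ hx2'.2, hx1,
          ⟨h, fun u hu hA => (hφu x2 m2 u hu hA).trans e.symm⟩,
          ⟨hφb x1 m1, hφu x1 m1⟩, ?_⟩
        intro x hx
        rcases hXBc x hx with rfl | rfl
        · exact Or.inr rfl
        · exact Or.inl e.symm
    have hwvne2 : wv ≠ u2 := by
      intro h
      have := ho2.1
      rw [h] at this
      exact no_loop hsc u2 this
    have hYbcard2 : Yb.card = X.card - 2 := by rw [hYbcard, hk]
    have hqc : Xᶜ.card = X.card - 2 := by omega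
    have hcov : Yb = Xᶜ := Finset.eq_of_subset_of_card_le hYbsub (by omega)
    have hallY : ∀ y, y ∉ X → y ∈ Yb := by
      intro y hy
      rw [hcov]
      exact Finset.mem_compl.2 hy
    have hq : 3 ≤ Xᶜ.card := by omega
    have hξall : ∀ y, y ∉ X → ξ y ∈ X ∧ ξ y ≠ u2 ∧ ξ y ≠ wv ∧ A y (ξ y) ∧
        ∀ u ∈ X, A y u → u = ξ y := by
      intro y hy
      have hyb := hallY y hy
      have h1 := hξYb y hyb
      have hnb := hξXB y hyb
      exact ⟨h1.1, fun h => hnb (by rw [h]; exact hu2XB),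
        fun h => hnb (by rw [h]; exact hwvXB), hξarc y hyb, hξuniq y hyb⟩
    have hξinj' : ∀ y y', y ∉ X → y' ∉ X → ξ y = ξ y' → y = y' := by
      intro y y' hy hy' h
      exact hξinj y (hallY y hy) y' (hallY y' hy') h
    by_cases hd : wv = u1
    · -- digon
      refine shape_digon (ξ := ξ) hsc hg hu1X hu2X nu12 ho1 ⟨by rw [← hd]; exact ho2.1, ?_⟩
        (by omega) ?_ hξinj'
      · intro u hu hA
        exact (ho2.2 u hu hA).trans hd
      · intro y hy
        obtain ⟨a1, a2, a3, a4, a5⟩ := hξall y hy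
        exact ⟨a1, fun h => a3 (h.trans hd.symm), a2, a4, a5⟩
    · -- path
      have hu1XB : u1 ∉ XB := by
        intro hc
        rcases hXBc2 u1 hc with h | h
        · exact nu12 h
        · exact hd h.symm
      obtain ⟨hgYb, hgeq⟩ := hξsurj u1 hu1X hu1XB
      exact shape_path (ξ := ξ) hsc hg hu1X hu2X hwvX nu12 (fun h => hd h.symm) hwvne2.symm
        ho1 ho2 hq hξall hξinj' (hYbY _ hgYb) hgeq
  · -- |XB| = 3 : cycle, no slack or slack
    obtain ⟨x1, hx1⟩ := Finset.card_pos.mp (show 0 < XB.card by omega)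
    obtain ⟨x2, hx2⟩ := Finset.card_pos.mp
      (show 0 < (XB.erase x1).card by rw [Finset.card_erase_of_mem hx1]; omega)
    obtain ⟨x3, hx3⟩ := Finset.card_pos.mp
      (show 0 < ((XB.erase x1).erase x2).card by
        rw [Finset.card_erase_of_mem hx2, Finset.card_erase_of_mem hx1]; omega)
    have hx2' := Finset.mem_erase.1 hx2
    have hx3' := Finset.mem_erase.1 hx3
    have hx3'' := Finset.mem_erase.1 hx3'.2
    have hd12 : x1 ≠ x2 := fun h => hx2'.1 h.symm
    have hd13 : x1 ≠ x3 := fun h => hx3''.1 h.symm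
    have hd23 : x2 ≠ x3 := fun h => hx3'.1 h.symm
    have m1 : x1 ∈ X := hXBsub hx1
    have m2 : x2 ∈ X := hXBsub hx2'.2
    have m3 : x3 ∈ X := hXBsub hx3''.2
    have f1 : φ x1 ∈ X := ((hXBiff x1).1 hx1).2
    have f2 : φ x2 ∈ X := ((hXBiff x2).1 hx2'.2).2
    have f3 : φ x3 ∈ X := ((hXBiff x3).1 hx3''.2).2
    have dw12 : φ x1 ≠ φ x2 := fun h => hd12 (hφinj x1 m1 x2 m2 h)
    have dw13 : φ x1 ≠ φ x3 := fun h => hd13 (hφinj x1 m1 x3 m3 h)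
    have dw23 : φ x2 ≠ φ x3 := fun h => hd23 (hφinj x2 m2 x3 m3 h)
    have hXBeq : {x1, x2, x3} = XB := by
      apply Finset.eq_of_subset_of_card_le
      · intro z hz
        rcases Finset.mem_insert.1 hz with rfl | hz'
        · exact hx1
        rcases Finset.mem_insert.1 hz' with rfl | hz''
        · exact hx2'.2
        rw [Finset.mem_singleton] at hz''
        exact hz'' ▸ hx3''.2
      · rw [Finset.card_insert_of_notMem (by simp [hd12, hd13]),
          Finset.card_insert_of_notMem (by simp [hd23]), Finset.card_singleton]
        omega
    have hXBc : ∀ x ∈ XB, x = x1 ∨ x = x2 ∨ x = x3 := by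
      intro x hx
      rw [← hXBeq] at hx
      simpa using hx
    obtain ⟨s1, s2, s3, hs1, hs2, hs3, n12, n13, n23, hs1XB, hs2XB, hs3XB,
        ho1, ho2, ho3, hXBc3⟩ :
        ∃ s1 s2 s3 : V, s1 ∈ X ∧ s2 ∈ X ∧ s3 ∈ X ∧ s1 ≠ s2 ∧ s1 ≠ s3 ∧ s2 ≠ s3 ∧
          s1 ∈ XB ∧ s2 ∈ XB ∧ s3 ∈ XB ∧
          (A s1 s2 ∧ ∀ u ∈ X, A s1 u → u = s2) ∧
          (A s2 s3 ∧ ∀ u ∈ X, A s2 u → u = s3) ∧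
          (A s3 s1 ∧ ∀ u ∈ X, A s3 u → u = s1) ∧
          (∀ x ∈ XB, x = s1 ∨ x = s2 ∨ x = s3) := by
      rcases three_class hsc f1 f2 f3 dw12 dw13 dw23
          ⟨hφb x1 m1, hφu x1 m1⟩ ⟨hφb x2 m2, hφu x2 m2⟩ ⟨hφb x3 m3, hφu x3 m3⟩ with
        ⟨e1, e2, e3⟩ | ⟨e1, e2, e3⟩
      · -- x1 = φ x2, x2 = φ x3, x3 = φ x1 : cycle φx1 → φx2 → φx3 → φx1
        refine ⟨φ x1, φ x2, φ x3, f1, f2, f3, dw12, dw13, dw23,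
          e3 ▸ hx3''.2, e1 ▸ hx1, e2 ▸ hx2'.2,
          ⟨e1 ▸ hφb x1 m1, fun u hu hA => (hφu x1 m1 u hu hA).trans e1⟩,
          ⟨e2 ▸ hφb x2 m2, fun u hu hA => (hφu x2 m2 u hu hA).trans e2⟩,
          ⟨e3 ▸ hφb x3 m3, fun u hu hA => (hφu x3 m3 u hu hA).trans e3⟩, ?_⟩
        intro x hx
        rcases hXBc x hx with rfl | rfl | rfl
        · exact Or.inr (Or.inl e1)
        · exact Or.inr (Or.inr e2)
        · exact Or.inl e3
      · -- x1 = φ x3, x3 = φ x2, x2 = φ x1 : cycle φx1 → φx3 → φx2 → φx1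
        refine ⟨φ x1, φ x3, φ x2, f1, f3, f2, dw13, dw12, fun h => dw23 h.symm,
          e3 ▸ hx2'.2, e1 ▸ hx1, e2 ▸ hx3''.2,
          ⟨e1 ▸ hφb x1 m1, fun u hu hA => (hφu x1 m1 u hu hA).trans e1⟩,
          ⟨e2 ▸ hφb x3 m3, fun u hu hA => (hφu x3 m3 u hu hA).trans e2⟩,
          ⟨e3 ▸ hφb x2 m2, fun u hu hA => (hφu x2 m2 u hu hA).trans e3⟩, ?_⟩
        intro x hx
        rcases hXBc x hx with rfl | rfl | rfl
        · exact Or.inr (Or.inl e1)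
        · exact Or.inl e3
        · exact Or.inr (Or.inr e2)
    have hYbcard3 : Yb.card = X.card - 3 := by rw [hYbcard, hk]
    by_cases hsl : Yb.card = Xᶜ.card
    · -- no slack
      have hcov : Yb = Xᶜ := Finset.eq_of_subset_of_card_le hYbsub (by omega)
      have hallY : ∀ y, y ∉ X → y ∈ Yb := by
        intro y hy
        rw [hcov]
        exact Finset.mem_compl.2 hy
      have hq : 2 ≤ Xᶜ.card := by omega
      refine shape_cycle (ξ := ξ) hsc hg hs1 hs2 hs3 n12 n13 n23 ho1 ho2 ho3 hq ?_ ?_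
      · intro y hy
        have hyb := hallY y hy
        have h1 := hξYb y hyb
        have hnb := hξXB y hyb
        exact ⟨h1.1, fun h => hnb (by rw [h]; exact hs1XB),
          fun h => hnb (by rw [h]; exact hs2XB),
          fun h => hnb (by rw [h]; exact hs3XB), hξarc y hyb, hξuniq y hyb⟩
      · intro y y' hy hy' h
        exact hξinj y (hallY y hy) y' (hallY y' hy') h
    · -- slack
      have hsd : (Xᶜ \ Yb).card = 1 := by
        rw [Finset.card_sdiff_of_subset hYbsub]
        omega
      obtain ⟨ystar, hstar⟩ := Finset.card_eq_one.mp hsd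
      have hysm : ystar ∈ Xᶜ \ Yb := by rw [hstar]; exact Finset.mem_singleton_self _
      have hys : ystar ∉ X := Finset.mem_compl.1 (Finset.mem_sdiff.1 hysm).1
      have hysnYb : ystar ∉ Yb := (Finset.mem_sdiff.1 hysm).2
      have hallY : ∀ y, y ∉ X → y ≠ ystar → y ∈ Yb := by
        intro y hy hne
        by_contra hc
        have : y ∈ Xᶜ \ Yb := Finset.mem_sdiff.2 ⟨Finset.mem_compl.2 hy, hc⟩
        rw [hstar, Finset.mem_singleton] at this
        exact hne this
      have hq : 3 ≤ Xᶜ.card := by omega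
      refine shape_slack (ξ := ξ) hsc hg hs1 hs2 hs3 n12 n13 n23 ho1 ho2 ho3 hys hq ?_ ?_ ?_
      · intro y hy hne
        have hyb := hallY y hy hne
        have h1 := hξYb y hyb
        have hnb := hξXB y hyb
        exact ⟨h1.1, fun h => hnb (by rw [h]; exact hs1XB),
          fun h => hnb (by rw [h]; exact hs2XB),
          fun h => hnb (by rw [h]; exact hs3XB), hξarc y hyb, hξuniq y hyb⟩
      · intro y y' hy hne hy' hne' h
        exact hξinj y (hallY y hy hne) y' (hallY y' hy' hne') h
      · intro x hx h1 h2 h3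
        have hxb : x ∉ XB := by
          intro hc
          rcases hXBc3 x hc with rfl | rfl | rfl
          · exact h1 rfl
          · exact h2 rfl
          · exact h3 rfl
        obtain ⟨hmem, heq⟩ := hξsurj x hx hxb
        exact ⟨φ x, hYbY _ hmem, fun h => hysnYb (h ▸ hmem), heq⟩


theorem good_compl {X : Finset V} (h : Good A X) : Good A Xᶜ := by
  intro v
  obtain ⟨⟨u, hu, hA⟩, ⟨u', hu', hA'⟩⟩ := h v
  exact ⟨⟨u', Finset.mem_compl.2 hu', hA'⟩, ⟨u, fun hc => (Finset.mem_compl.1 hc) hu, hA⟩⟩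

theorem balance (hsc : IsSemicomplete A) (hn : 7 ≤ Fintype.card V) :
    ∀ m : ℕ, ∀ X : Finset V, X.card ≤ m → Good A X → Xᶜ.card ≤ X.card →
      ∃ Z : Finset V, Good A Z ∧ Zᶜ.card ≤ Z.card ∧ Z.card ≤ Zᶜ.card + 1 := by
  intro m
  induction m with
  | zero =>
      intro X h0 hgX _
      have hv : Nonempty V := Fintype.card_pos_iff.mp (by omega)
      obtain ⟨v⟩ := hv
      obtain ⟨u, hu, _⟩ := (hgX v).1
      have hX : X = ∅ := Finset.card_eq_zero.mp (by omega)
      rw [hX] at hu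
      exact absurd hu (Finset.notMem_empty u)
  | succ m ih =>
      intro X hcard hgX hcomp
      by_cases himb : Xᶜ.card + 2 ≤ X.card
      · obtain ⟨X', hg', hc'⟩ := improve hsc hgX himb hn
        have h1 : X.card + Xᶜ.card = Fintype.card V := Finset.card_add_card_compl X
        have h2 : X'.card + X'ᶜ.card = Fintype.card V := Finset.card_add_card_compl X'
        exact ih X' (by omega) hg' (by omega)
      · exact ⟨X, hgX, hcomp, by omega⟩
end Stmt9

/-- Every semicomplete digraph on at least 7 vertices admits a 2-out-colouring if and
only if it admits a balanced 2-out-colouring (the two colour classes have sizes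
differing by at most one). -/
theorem stmt9 {V : Type*} [Fintype V] (A : V → V → Prop) (hT : IsSemicomplete A)
    (hn : 7 ≤ Fintype.card V) :
    (∃ γ : V → Fin 2, IsOutColouring A γ) ↔
    (∃ γ : V → Fin 2, IsOutColouring A γ ∧
      |((γ ⁻¹' {0} : Set V).ncard : ℤ) - ((γ ⁻¹' {1} : Set V).ncard : ℤ)| ≤ 1) := by
  classical
  constructor
  · rintro ⟨γ, hγ⟩
    have hfin2 : ∀ a : Fin 2, a = 0 ∨ a = 1 := by decide
    set X0 : Finset V := Finset.univ.filter (fun v => γ v = 0) with hX0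
    have hmem : ∀ v, v ∈ X0 ↔ γ v = 0 := by
      intro v
      simp [hX0]
    have hgood : Stmt9.Good A X0 := by
      intro v
      obtain ⟨u, w, hu, hw, hne⟩ := hγ v
      constructor
      · rcases hfin2 (γ u) with h | h
        · exact ⟨u, (hmem u).2 h, hu⟩
        · rcases hfin2 (γ w) with h' | h'
          · exact ⟨w, (hmem w).2 h', hw⟩
          · exact absurd (h.trans h'.symm) hne
      · rcases hfin2 (γ u) with h | h
        · rcases hfin2 (γ w) with h' | h'
          · exact absurd (h.trans h'.symm) hne
          · exact ⟨w, fun hc => by rw [(hmem w).1 hc] at h'; exact absurd h' (by decide), hw⟩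
        · exact ⟨u, fun hc => by rw [(hmem u).1 hc] at h; exact absurd h (by decide), hu⟩
    have hZ : ∃ Z : Finset V, Stmt9.Good A Z ∧ Zᶜ.card ≤ Z.card ∧ Z.card ≤ Zᶜ.card + 1 := by
      by_cases hb : X0ᶜ.card ≤ X0.card
      · exact Stmt9.balance hT hn (Fintype.card V) X0 (Finset.card_le_univ X0) hgood hb
      · refine Stmt9.balance hT hn (Fintype.card V) X0ᶜ (Finset.card_le_univ _)
          (Stmt9.good_compl hgood) ?_
        rw [compl_compl]
        omega
    obtain ⟨Z, hZg, hb1, hb2⟩ := hZ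
    set γ' : V → Fin 2 := fun v => if v ∈ Z then 0 else 1 with hγ'
    have hγ'0 : ∀ v, γ' v = 0 ↔ v ∈ Z := by
      intro v
      by_cases h : v ∈ Z <;> simp [hγ', h]
    have hγ'1 : ∀ v, γ' v = 1 ↔ v ∉ Z := by
      intro v
      by_cases h : v ∈ Z <;> simp [hγ', h]
    refine ⟨γ', ?_, ?_⟩
    · intro v
      obtain ⟨⟨u, hu, hAu⟩, ⟨u', hu', hAu'⟩⟩ := hZg v
      refine ⟨u, u', hAu, hAu', ?_⟩
      rw [(hγ'0 u).2 hu, (hγ'1 u').2 hu']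
      decide
    · have e0 : (γ' ⁻¹' {0} : Set V) = (Z : Set V) := by
        ext v
        simp only [Set.mem_preimage, Set.mem_singleton_iff, Finset.coe_sort_coe,
          Finset.mem_coe]
        exact hγ'0 v
      have e1 : (γ' ⁻¹' {1} : Set V) = ((Zᶜ : Finset V) : Set V) := by
        ext v
        simp only [Set.mem_preimage, Set.mem_singleton_iff, Finset.coe_sort_coe,
          Finset.mem_coe, Finset.mem_compl]
        exact hγ'1 v
      rw [e0, e1, Set.ncard_coe_finset, Set.ncard_coe_finset, abs_le]
      constructor <;> [skip; skip] <;> omega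
  · rintro ⟨γ, h, _⟩
    exact ⟨γ, h⟩
end
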